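/- arXiv:1901.00585 — 7 statements merged into one kernel-verified Lean document; each statement's English description precedes it below -/
import Mathlib

section
/- Let X be a finite simple graph on n vertices with at least one edge, with minimal degree δ and largest Laplacian eigenvalue λ_max. Then the independence number α of X satisfies α ≤ n(1 − δ/λ_max). -/
open Finset Matrix

/-- The independence number: the largest size of a set of pairwise non-adjacent vertices. -/
noncomputable def indepNum {V : Type*} (G : SimpleGraph V) : ℕ :=
  sSup {n | ∃ s : Finset V, (∀ v ∈ s, ∀ w ∈ s, ¬ G.Adj v w) ∧ s.card = n}

/-- The degree of a vertex: the number of its neighbours. -/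
noncomputable def deg {V : Type*} (G : SimpleGraph V) (v : V) : ℕ :=
  (G.neighborSet v).ncard

/-- The minimal degree. -/
noncomputable def minDeg {V : Type*} (G : SimpleGraph V) : ℕ :=
  sInf (Set.range (deg G))

/-- The maximal degree. -/
noncomputable def maxDeg {V : Type*} (G : SimpleGraph V) : ℕ :=
  sSup (Set.range (deg G))

/-- The largest eigenvalue of the Laplacian matrix `L = D - A`. -/
noncomputable def lapMax {V : Type*} [Fintype V] (G : SimpleGraph V) : ℝ :=
  letI := Classical.decEq V
  letI := Classical.decRel G.Adj
  ⨆ i, (SimpleGraph.posSemidef_lapMatrix ℝ G).1.eigenvalues i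

/-- The derived graph: the induced subgraph on the vertices of non-maximal degree. -/
noncomputable def derived {V : Type*} (G : SimpleGraph V) :
    SimpleGraph {v : V | deg G v < maxDeg G} :=
  G.induce {v : V | deg G v < maxDeg G}

lemma rayleigh {n : Type*} [Fintype n] [DecidableEq n] [Nonempty n] {A : Matrix n n ℝ}
    (hA : A.IsHermitian) (x : n → ℝ) :
    x ⬝ᵥ (A *ᵥ x) ≤ (⨆ i, hA.eigenvalues i) * (x ⬝ᵥ x) := by
  set U : Matrix n n ℝ := (hA.eigenvectorUnitary : Matrix n n ℝ) with hU
  set y : n → ℝ := star U *ᵥ x with hy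
  have hvm : vecMul x U = y := by
    ext j
    simp [hy, vecMul, mulVec, dotProduct, star_apply, mul_comm]
  have h1 : x ⬝ᵥ (A *ᵥ x) = ∑ i, hA.eigenvalues i * (y i * y i) := by
    conv_lhs => rw [hA.spectral_theorem, Unitary.conjStarAlgAut_apply]
    rw [← mulVec_mulVec, ← mulVec_mulVec, dotProduct_mulVec, hvm]
    simp [dotProduct, mulVec_diagonal, RCLike.ofReal_real_eq_id, mul_assoc, mul_comm, mul_left_comm]
    rfl
  have h2 : x ⬝ᵥ x = ∑ i, y i * y i := by
    have this : y ⬝ᵥ y = x ⬝ᵥ ((U * star U) *ᵥ x) := by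
      calc y ⬝ᵥ y = (x ᵥ* U) ⬝ᵥ (star U *ᵥ x) := by rw [hvm]
        _ = x ⬝ᵥ (U *ᵥ (star U *ᵥ x)) := (dotProduct_mulVec x U _).symm
        _ = x ⬝ᵥ ((U * star U) *ᵥ x) := by rw [mulVec_mulVec]
    have hUU : U * star U = 1 := mem_unitaryGroup_iff.mp hA.eigenvectorUnitary.2
    rw [hUU, one_mulVec] at this
    simpa [dotProduct] using this.symm
  rw [h1, h2, Finset.mul_sum]
  apply Finset.sum_le_sum
  intro i _
  exact mul_le_mul_of_nonneg_right
    (le_ciSup (Set.Finite.bddAbove (Set.finite_range _)) i) (mul_self_nonneg _)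


/-- **Hoffman-type bound** (Theorem 1): for a graph with at least one edge,
the independence number satisfies `α ≤ n (1 - δ / λ_max)`. -/
theorem hoffman_type_bound {V : Type*} [Fintype V] (G : SimpleGraph V)
    (hne : ∃ v w, G.Adj v w) :
    (indepNum G : ℝ) ≤ (Fintype.card V : ℝ) * (1 - (minDeg G : ℝ) / lapMax G) := by
  letI := Classical.decEq V
  letI := Classical.decRel G.Adj
  obtain ⟨v0, w0, hvw⟩ := hne
  haveI : Nonempty V := ⟨v0⟩
  set L : Matrix V V ℝ := G.lapMatrix ℝ with hLdef
  have hHerm : L.IsHermitian := (SimpleGraph.posSemidef_lapMatrix ℝ G).1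
  have hlap : lapMax G = ⨆ i, hHerm.eigenvalues i := rfl
  have hRay : ∀ x : V → ℝ, x ⬝ᵥ (L *ᵥ x) ≤ lapMax G * (x ⬝ᵥ x) := by
    intro x; rw [hlap]; exact rayleigh hHerm x
  have hform : ∀ x : V → ℝ, x ⬝ᵥ (L *ᵥ x)
      = (∑ i, ∑ j, if G.Adj i j then (x i - x j)^2 else 0)/2 := by
    intro x
    rw [← Matrix.toLinearMap₂'_apply']
    exact G.lapMatrix_toLinearMap₂' ℝ x
  -- degree facts
  have hdeg : ∀ v, deg G v = G.degree v := by
    intro v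
    rw [deg, Set.ncard_eq_toFinset_card']
    rfl
  have hδ : ∀ v, (minDeg G : ℝ) ≤ (G.degree v : ℝ) := by
    intro v
    have : minDeg G ≤ deg G v := Nat.sInf_le ⟨v, rfl⟩
    rw [hdeg v] at this
    exact_mod_cast this
  -- positivity of lapMax
  have hlpos : 0 < lapMax G := by
    set x0 : V → ℝ := fun u => if u = v0 then 1 else if u = w0 then -1 else 0 with hx0
    have hvw' : v0 ≠ w0 := G.ne_of_adj hvw
    have hQ : (4:ℝ) ≤ ∑ i, ∑ j, if G.Adj i j then (x0 i - x0 j)^2 else 0 := by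
      have h1 : (4:ℝ) = (if G.Adj v0 w0 then (x0 v0 - x0 w0)^2 else 0) := by
        rw [if_pos hvw]
        simp only [hx0, if_pos rfl, if_neg hvw'.symm, if_neg hvw']
        norm_num
      rw [h1]
      have inner : ∀ i : V, (if G.Adj i w0 then (x0 i - x0 w0)^2 else 0)
          ≤ ∑ j, if G.Adj i j then (x0 i - x0 j)^2 else 0 := by
        intro i
        exact Finset.single_le_sum
          (f := fun j => if G.Adj i j then (x0 i - x0 j)^2 else 0)
          (fun j _ => by positivity) (mem_univ w0)
      calc (if G.Adj v0 w0 then (x0 v0 - x0 w0)^2 else 0)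
          ≤ ∑ j, if G.Adj v0 j then (x0 v0 - x0 j)^2 else 0 := inner v0
        _ ≤ ∑ i, ∑ j, if G.Adj i j then (x0 i - x0 j)^2 else 0 :=
            Finset.single_le_sum
              (f := fun i => ∑ j, if G.Adj i j then (x0 i - x0 j)^2 else 0)
              (fun i _ => Finset.sum_nonneg fun j _ => by positivity) (mem_univ v0)
    have h2 : (2:ℝ) ≤ lapMax G * (x0 ⬝ᵥ x0) := by
      refine le_trans ?_ (hRay x0)
      rw [hform x0]
      linarith
    have hp : 0 ≤ x0 ⬝ᵥ x0 := Finset.sum_nonneg fun i _ => mul_self_nonneg _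
    nlinarith
  -- the independent set
  have hbdd : BddAbove {n | ∃ s : Finset V, (∀ v ∈ s, ∀ w ∈ s, ¬ G.Adj v w) ∧ s.card = n} := by
    refine ⟨Fintype.card V, ?_⟩
    rintro n ⟨s, -, rfl⟩
    exact s.card_le_univ
  have hmem : indepNum G ∈ {n | ∃ s : Finset V, (∀ v ∈ s, ∀ w ∈ s, ¬ G.Adj v w) ∧ s.card = n} :=
    Nat.sSup_mem ⟨0, ∅, by simp, by simp⟩ hbdd
  obtain ⟨s, hind, hcard⟩ := hmem
  have hα1 : 1 ≤ indepNum G := by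
    apply le_csSup hbdd
    refine ⟨{v0}, ?_, by simp⟩
    intro a ha b hb
    rw [Finset.mem_singleton] at ha hb
    subst ha; subst hb
    exact G.irrefl
  have han : indepNum G ≤ Fintype.card V := hcard ▸ s.card_le_univ
  set a : ℝ := (indepNum G : ℝ) with hadef
  set nn : ℝ := (Fintype.card V : ℝ) with hnndef
  have ha1 : (1:ℝ) ≤ a := by rw [hadef]; exact_mod_cast hα1
  have ha0 : (0:ℝ) < a := lt_of_lt_of_le one_pos ha1
  have hanR : a ≤ nn := by rw [hadef, hnndef]; exact_mod_cast han
  have hnn0 : (0:ℝ) < nn := lt_of_lt_of_le ha0 hanR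
  set c : ℝ := a / nn with hcdef
  set x : V → ℝ := fun v => if v ∈ s then 1 - c else -c with hx
  -- lower bound on the quadratic form
  have hpt : ∀ i j : V, ((if i ∈ s ∧ G.Adj i j then (1:ℝ) else 0)
      + (if j ∈ s ∧ G.Adj i j then (1:ℝ) else 0))
      ≤ (if G.Adj i j then (x i - x j)^2 else 0) := by
    intro i j
    by_cases hadj : G.Adj i j
    · by_cases hi : i ∈ s
      · have hj : j ∉ s := fun hj => hind i hi j hj hadj
        simp [hx, hi, hj, hadj]
      · by_cases hj : j ∈ s
        · simp [hx, hi, hj, hadj]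
          ring_nf
          norm_num
        · simp [hx, hi, hj, hadj]
    · simp [hadj]
  have hS1 : ∀ i : V, (∑ j, if i ∈ s ∧ G.Adj i j then (1:ℝ) else 0)
      = if i ∈ s then (G.degree i : ℝ) else 0 := by
    intro i
    by_cases hi : i ∈ s
    · simp only [hi, true_and, if_true]
      exact (G.degree_eq_sum_if_adj i).symm
    · simp [hi]
  have hS1' : (↑(minDeg G) * a) ≤ ∑ i, ∑ j, if i ∈ s ∧ G.Adj i j then (1:ℝ) else 0 := by
    calc (↑(minDeg G) * a) = ∑ i ∈ s, (minDeg G : ℝ) := by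
          rw [Finset.sum_const, nsmul_eq_mul, hcard, hadef]; ring
      _ ≤ ∑ i ∈ s, (G.degree i : ℝ) := Finset.sum_le_sum fun i _ => hδ i
      _ = ∑ i, if i ∈ s then (G.degree i : ℝ) else 0 := by rw [Finset.sum_ite_mem, univ_inter]
      _ = ∑ i, ∑ j, if i ∈ s ∧ G.Adj i j then (1:ℝ) else 0 := by
          exact Finset.sum_congr rfl fun i _ => (hS1 i).symm
  have hS2' : (↑(minDeg G) * a) ≤ ∑ i, ∑ j, if j ∈ s ∧ G.Adj i j then (1:ℝ) else 0 := by
    rw [Finset.sum_comm]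
    refine le_trans hS1' (le_of_eq ?_)
    refine Finset.sum_congr rfl fun i _ => Finset.sum_congr rfl fun j _ => ?_
    exact if_congr (and_congr_right fun _ => G.adj_comm i j) rfl rfl
  have hQ : 2 * (↑(minDeg G) * a) ≤ ∑ i, ∑ j, if G.Adj i j then (x i - x j)^2 else 0 := by
    calc 2 * (↑(minDeg G) * a)
        ≤ (∑ i, ∑ j, if i ∈ s ∧ G.Adj i j then (1:ℝ) else 0)
          + ∑ i, ∑ j, if j ∈ s ∧ G.Adj i j then (1:ℝ) else 0 := by linarith [hS1', hS2']
      _ = ∑ i, ∑ j, ((if i ∈ s ∧ G.Adj i j then (1:ℝ) else 0)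
          + (if j ∈ s ∧ G.Adj i j then (1:ℝ) else 0)) := by
          rw [← Finset.sum_add_distrib]
          exact Finset.sum_congr rfl fun i _ => (Finset.sum_add_distrib).symm
      _ ≤ _ := Finset.sum_le_sum fun i _ => Finset.sum_le_sum fun j _ => hpt i j
  have hxLx : ↑(minDeg G) * a ≤ x ⬝ᵥ (L *ᵥ x) := by
    rw [hform x]; linarith [hQ]
  have hxx : x ⬝ᵥ x = a * (1-c)^2 + (nn - a) * c^2 := by
    have hterm : ∀ v : V, x v * x v = if v ∈ s then (1-c)^2 else c^2 := by
      intro v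
      by_cases hv : v ∈ s <;> simp [hx, hv] <;> ring
    rw [dotProduct]
    rw [Finset.sum_congr rfl fun v _ => hterm v, Finset.sum_ite, Finset.sum_const,
      Finset.sum_const, Finset.filter_mem_eq_inter, Finset.univ_inter, Finset.filter_not,
      Finset.filter_mem_eq_inter, Finset.univ_inter, Finset.card_sdiff_of_subset (Finset.subset_univ s),
      Finset.card_univ, nsmul_eq_mul, nsmul_eq_mul, hcard, Nat.cast_sub han]
  have hxx2 : x ⬝ᵥ x = a - a^2/nn := by
    rw [hxx, hcdef]
    field_simp
    ring
  have key : ↑(minDeg G) * a ≤ lapMax G * (a - a^2/nn) :=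
    le_trans hxLx ((hRay x).trans_eq (by rw [hxx2]))
  have key2 : ↑(minDeg G) * a * nn ≤ lapMax G * (a*nn - a^2) := by
    have e1 : lapMax G * (a - a^2/nn) * nn = lapMax G * (a*nn - a^2) := by
      field_simp
    nlinarith [mul_le_mul_of_nonneg_right key hnn0.le]
  have hgoal : (1:ℝ) - ↑(minDeg G) / lapMax G = (lapMax G - ↑(minDeg G)) / lapMax G := by
    field_simp
  rw [hgoal, ← mul_div_assoc, le_div_iff₀ hlpos]
  nlinarith [key2, ha0, hlpos, hanR]
end

section
/- Let X be a finite simple graph on n vertices with at least one edge, with minimal degree δ, maximal degree Δ, and largest Laplacian eigenvalue λ_max. Let α' be the independence number of the derived graph X' (the induced subgraph on the vertices of degree strictly less than Δ). Then the independence number α of X satisfies α ≤ n(1 − Δ/λ_max) + α'·(Δ − δ)/(λ_max − δ). -/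
open Finset Matrix

section Helpers

lemma quad_le {n : Type*} [Fintype n] [DecidableEq n] {A : Matrix n n ℝ}
    (hA : A.IsHermitian) (μ : ℝ) (hμ : ∀ i, hA.eigenvalues i ≤ μ) (z : n → ℝ) :
    z ⬝ᵥ (A *ᵥ z) ≤ μ * (z ⬝ᵥ z) := by
  set U : Matrix n n ℝ := (hA.eigenvectorUnitary : Matrix n n ℝ) with hU
  have hstar : star U = Uᵀ := by
    rw [Matrix.star_eq_conjTranspose, conjTranspose_eq_transpose_of_trivial]
  have h1 : U * Uᵀ = 1 := by
    rw [← hstar]; exact mem_unitaryGroup_iff.mp (SetLike.coe_mem hA.eigenvectorUnitary)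
  set w : n → ℝ := Uᵀ *ᵥ z with hw
  have hsq : z ⬝ᵥ z = w ⬝ᵥ w := by
    rw [hw, dotProduct_mulVec, vecMul_transpose, mulVec_mulVec, h1, one_mulVec]
  have hquad : z ⬝ᵥ (A *ᵥ z) = ∑ i, hA.eigenvalues i * (w i * w i) := by
    conv_lhs => rw [hA.spectral_theorem, Unitary.conjStarAlgAut_apply]
    rw [hstar, ← mulVec_mulVec, ← mulVec_mulVec, dotProduct_mulVec, ← mulVec_transpose, ← hw]
    simp only [dotProduct, mulVec_diagonal, Function.comp]; exact Finset.sum_congr rfl fun i _ => by simp; ring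
  rw [hquad, hsq, dotProduct, Finset.mul_sum]
  exact Finset.sum_le_sum fun i _ => by nlinarith [mul_self_nonneg (w i), hμ i]


lemma edge_sum_eq {V : Type*} [Fintype V] [DecidableEq V] (G : SimpleGraph V)
    [DecidableRel G.Adj] (S : Finset V) (hS : ∀ v ∈ S, ∀ w ∈ S, ¬ G.Adj v w)
    (x : V → ℝ) (hx : ∀ v, v ∉ S → x v = 0) :
    ∑ i, ∑ j, (if G.Adj i j then (x i - x j)^2 else 0)
      = 2 * ∑ i, (G.degree i : ℝ) * x i ^ 2 := by
  have hrow : ∀ (c : ℝ) i, ∑ j, (if G.Adj i j then c else 0) = (G.degree i : ℝ) * c := by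
    intro c i
    calc ∑ j, (if G.Adj i j then c else 0)
        = (∑ j, if G.Adj i j then (1:ℝ) else 0) * c := by
          rw [Finset.sum_mul]; exact Finset.sum_congr rfl fun j _ => by split <;> simp
      _ = (G.degree i : ℝ) * c := by rw [← SimpleGraph.degree_eq_sum_if_adj]
  have key : ∀ i j, (if G.Adj i j then (x i - x j)^2 else 0)
      = (if G.Adj i j then x i^2 else 0) + (if G.Adj i j then x j^2 else 0) := by
    intro i j
    by_cases h : G.Adj i j
    · have hx0 : x i * x j = 0 := by
        by_cases hi : i ∈ S
        · by_cases hj : j ∈ S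
          · exact absurd h (hS i hi j hj)
          · rw [hx j hj, mul_zero]
        · rw [hx i hi, zero_mul]
      simp only [if_pos h]
      nlinarith [hx0]
    · simp [h]
  simp_rw [key, Finset.sum_add_distrib]
  have h2 : ∑ i, ∑ j, (if G.Adj i j then x j ^ 2 else 0) = ∑ i, (G.degree i : ℝ) * x i ^ 2 := by
    rw [Finset.sum_comm]
    refine Finset.sum_congr rfl fun j _ => ?_
    rw [← hrow (x j ^ 2) j]
    exact Finset.sum_congr rfl fun i _ => if_congr (G.adj_comm i j) rfl rfl
  simp_rw [hrow, h2]
  ring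

lemma lap_shift {V : Type*} [Fintype V] [Nonempty V] [DecidableEq V] (G : SimpleGraph V)
    [DecidableRel G.Adj] (μ : ℝ)
    (hμ : ∀ i, (SimpleGraph.posSemidef_lapMatrix ℝ G).1.eigenvalues i ≤ μ) (x : V → ℝ) :
    x ⬝ᵥ (G.lapMatrix ℝ *ᵥ x) ≤ μ * (x ⬝ᵥ x - (∑ i, x i)^2 / (Fintype.card V : ℝ)) := by
  set L := G.lapMatrix ℝ with hLdef
  have hL : L.IsHermitian := (SimpleGraph.posSemidef_lapMatrix ℝ G).1
  set n : ℝ := (Fintype.card V : ℝ) with hn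
  have hn0 : (0:ℝ) < n := by positivity -- card pos since nonempty
  set c : ℝ := (∑ i, x i) / n with hc
  set y : V → ℝ := fun i => x i - c with hy
  have hLy : L *ᵥ y = L *ᵥ x := by
    have : y = x - c • (fun _ => (1:ℝ)) := by funext i; simp [hy, mul_comm]
    rw [this, mulVec_sub, mulVec_smul, SimpleGraph.lapMatrix_mulVec_const_eq_zero, smul_zero,
      sub_zero]
  have hone : (fun _ : V => (1:ℝ)) ⬝ᵥ (L *ᵥ x) = 0 := by
    rw [dotProduct_mulVec, ← mulVec_transpose, (SimpleGraph.isSymm_lapMatrix ℝ G).eq,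
      SimpleGraph.lapMatrix_mulVec_const_eq_zero]
    simp [dotProduct]
  have hquad : y ⬝ᵥ (L *ᵥ y) = x ⬝ᵥ (L *ᵥ x) := by
    rw [hLy]
    have : y ⬝ᵥ (L *ᵥ x) = x ⬝ᵥ (L *ᵥ x) - c * ((fun _ : V => (1:ℝ)) ⬝ᵥ (L *ᵥ x)) := by
      simp [hy, dotProduct, sub_mul, Finset.sum_sub_distrib, Finset.mul_sum]
    rw [this, hone, mul_zero, sub_zero]
  have hnorm : y ⬝ᵥ y = x ⬝ᵥ x - (∑ i, x i)^2 / n := by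
    have : ∀ i : V, y i * y i = x i * x i - 2 * c * x i + c^2 := by intro i; simp [hy]; ring
    simp_rw [dotProduct, this, Finset.sum_add_distrib, Finset.sum_sub_distrib,
      Finset.sum_const, ← Finset.mul_sum]
    have hcard : ((Finset.univ : Finset V).card : ℝ) = n := by rw [hn]; norm_num
    rw [nsmul_eq_mul, hcard, hc]
    field_simp
    ring
  have := quad_le hL μ hμ y
  rw [hquad, hnorm] at this
  exact this

lemma lapmax_ge {V : Type*} [Fintype V] [DecidableEq V] (G : SimpleGraph V)
    [DecidableRel G.Adj] (μ : ℝ)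
    (hμ : ∀ i, (SimpleGraph.posSemidef_lapMatrix ℝ G).1.eigenvalues i ≤ μ)
    (v : V) (hd : 1 ≤ G.degree v) : (G.degree v : ℝ) + 1 ≤ μ := by
  set L := G.lapMatrix ℝ with hLdef
  have hL : L.IsHermitian := (SimpleGraph.posSemidef_lapMatrix ℝ G).1
  set d : ℝ := (G.degree v : ℝ) with hdd
  have hd1 : (1:ℝ) ≤ d := by rw [hdd]; exact_mod_cast hd
  set z : V → ℝ := fun u => if u = v then d else if G.Adj v u then -1 else 0 with hz
  set f : V → V → ℝ := fun i j => if G.Adj i j then (z i - z j)^2 else 0 with hf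
  have hf0 : ∀ i j, 0 ≤ f i j := by intro i j; simp only [hf]; split <;> positivity
  have hrow : ∀ (c : ℝ) (i : V), ∑ j, (if G.Adj i j then c else 0) = (G.degree i : ℝ) * c := by
    intro c i
    calc ∑ j, (if G.Adj i j then c else 0)
        = (∑ j, if G.Adj i j then (1:ℝ) else 0) * c := by
          rw [Finset.sum_mul]; exact Finset.sum_congr rfl fun j _ => by split <;> simp
      _ = (G.degree i : ℝ) * c := by rw [← SimpleGraph.degree_eq_sum_if_adj]
  have hfv : ∀ j, f v j = if G.Adj v j then (d+1)^2 else 0 := by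
    intro j
    simp only [hf, hz]
    by_cases h : G.Adj v j
    · have hne : j ≠ v := fun e => G.irrefl (e ▸ h)
      simp [h, hne]
    · simp [h]
  have hfv' : ∀ i, f i v = if G.Adj v i then (d+1)^2 else 0 := by
    intro i
    have : f i v = f v i := by
      simp only [hf]
      exact if_congr (G.adj_comm i v) (by ring) rfl
    rw [this, hfv]
  have hsum1 : ∑ j, f v j = d * (d+1)^2 := by simp_rw [hfv]; rw [hrow]
  have hsum2 : ∑ i, f i v = d * (d+1)^2 := by simp_rw [hfv']; rw [hrow]
  have hfvv : f v v = 0 := by simp [hf, G.irrefl]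
  have hbig : 2 * (d * (d+1)^2) ≤ ∑ i, ∑ j, f i j := by
    rw [← Finset.add_sum_erase Finset.univ (fun i => ∑ j, f i j) (Finset.mem_univ v)]
    have h1 : ∑ i ∈ Finset.univ.erase v, f i v ≤ ∑ i ∈ Finset.univ.erase v, ∑ j, f i j :=
      Finset.sum_le_sum fun i _ => Finset.single_le_sum (fun j _ => hf0 i j) (Finset.mem_univ v)
    have h2 : ∑ i ∈ Finset.univ.erase v, f i v = d * (d+1)^2 := by
      rw [← Finset.add_sum_erase Finset.univ (fun i => f i v) (Finset.mem_univ v), hfvv,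
        zero_add] at hsum2
      exact hsum2
    rw [hsum1]
    linarith
  have hnorm : z ⬝ᵥ z = d^2 + d := by
    have hpt : ∀ u, z u * z u = (if u = v then d^2 else 0) + (if G.Adj v u then 1 else 0) := by
      intro u
      simp only [hz]
      by_cases h : u = v
      · subst h; simp [G.irrefl]; ring
      · by_cases h2 : G.Adj v u <;> simp [h, h2]
    simp_rw [dotProduct, hpt, Finset.sum_add_distrib, Finset.sum_ite_eq' Finset.univ v,
      Finset.mem_univ, if_pos, hrow 1 v]
    simp [hdd]
  have hquad : z ⬝ᵥ (L *ᵥ z) = (∑ i, ∑ j, f i j) / 2 := by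
    rw [← Matrix.toLinearMap₂'_apply', SimpleGraph.lapMatrix_toLinearMap₂']
  have hup := quad_le hL μ hμ z
  rw [hquad, hnorm] at hup
  have : d * (d+1)^2 ≤ μ * (d^2 + d) := by linarith
  have hdpos : 0 < d * (d+1) := by nlinarith
  nlinarith

end Helpers

/-- **The relative bound** (Theorem 2): for a graph with at least one edge,
the independence number satisfies `α ≤ n (1 - Δ / λ_max) + α' (Δ - δ)/(λ_max - δ)`,
where `α'` is the independence number of the derived graph. -/
theorem relative_bound {V : Type*} [Fintype V] (G : SimpleGraph V)
    (hne : ∃ v w, G.Adj v w) :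
    (indepNum G : ℝ) ≤ (Fintype.card V : ℝ) * (1 - (maxDeg G : ℝ) / lapMax G)
      + (indepNum (derived G) : ℝ) * ((maxDeg G : ℝ) - (minDeg G : ℝ)) / (lapMax G - (minDeg G : ℝ)) := by
  letI := Classical.decEq V
  letI := Classical.decRel G.Adj
  obtain ⟨v0, w0, hvw⟩ := hne
  haveI hVne : Nonempty V := ⟨v0⟩
  have hlam_eq : lapMax G = ⨆ i, (SimpleGraph.posSemidef_lapMatrix ℝ G).1.eigenvalues i := rfl
  have hlam_ge : ∀ i, (SimpleGraph.posSemidef_lapMatrix ℝ G).1.eigenvalues i ≤ lapMax G := by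
    intro i
    rw [hlam_eq]
    exact le_ciSup (Set.Finite.bddAbove (Set.finite_range _)) i
  have hdd : ∀ v, deg G v = G.degree v := fun v => by
    rw [deg, ← Nat.card_coe_set_eq, Nat.card_eq_fintype_card, G.card_neighborSet_eq_degree]
  -- basic degree facts
  have hbdeg : BddAbove (Set.range (deg G)) := Set.Finite.bddAbove (Set.finite_range _)
  have hdeg_le : ∀ v, deg G v ≤ maxDeg G := fun v => le_csSup hbdeg ⟨v, rfl⟩
  have hmin_le : ∀ v, minDeg G ≤ deg G v := fun v => Nat.sInf_le ⟨v, rfl⟩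
  obtain ⟨vmax, hvmax⟩ : maxDeg G ∈ Set.range (deg G) :=
    Nat.sSup_mem ⟨_, ⟨v0, rfl⟩⟩ hbdeg
  have hdeg0 : 1 ≤ G.degree v0 :=
    (G.degree_pos_iff_exists_adj v0).mpr ⟨w0, hvw⟩
  have hΔ1 : 1 ≤ maxDeg G := by have := hdeg_le v0; rw [hdd] at this; omega
  have hδΔ : minDeg G ≤ maxDeg G := hvmax ▸ hmin_le vmax
  -- lambda ≥ Δ + 1
  have hlamΔ : (maxDeg G : ℝ) + 1 ≤ lapMax G := by
    have h1 : 1 ≤ G.degree vmax := by rw [← hdd, hvmax]; exact hΔ1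
    have := lapmax_ge G (lapMax G) hlam_ge vmax h1
    rw [← hdd, hvmax] at this
    exact this
  -- independent set attaining indepNum
  have hIbdd : BddAbove {n | ∃ s : Finset V, (∀ v ∈ s, ∀ w ∈ s, ¬ G.Adj v w) ∧ s.card = n} :=
    ⟨Fintype.card V, by rintro n ⟨s, -, rfl⟩; simpa using Finset.card_le_univ s⟩
  obtain ⟨S, hSind, hScard⟩ : indepNum G ∈
      {n | ∃ s : Finset V, (∀ v ∈ s, ∀ w ∈ s, ¬ G.Adj v w) ∧ s.card = n} :=
    Nat.sSup_mem ⟨0, ⟨∅, by simp, rfl⟩⟩ hIbdd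
  set S2 : Finset V := S.filter (fun v => deg G v < maxDeg G) with hS2def
  set S1 : Finset V := S.filter (fun v => ¬ deg G v < maxDeg G) with hS1def
  have hpq : S2.card + S1.card = S.card := Finset.card_filter_add_card_filter_not _
  have hS1deg : ∀ v ∈ S1, deg G v = maxDeg G := by
    intro v hv
    have := (Finset.mem_filter.mp hv).2
    have := hdeg_le v
    omega
  -- q ≤ indepNum of derived graph
  have hq_le : S2.card ≤ indepNum (derived G) := by
    set t : Finset {v : V | deg G v < maxDeg G} :=
      S2.attach.map ⟨fun x => ⟨x.1, (Finset.mem_filter.mp x.2).2⟩,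
        fun u v h => Subtype.ext (congrArg Subtype.val h : (u:V) = v)⟩ with htdef
    have htcard : t.card = S2.card := by
      rw [htdef, Finset.card_map, Finset.card_attach]
    have htind : ∀ v ∈ t, ∀ w ∈ t, ¬ (derived G).Adj v w := by
      rintro v hv w hw hadj
      rw [htdef] at hv hw
      obtain ⟨a, -, rfl⟩ := Finset.mem_map.mp hv
      obtain ⟨c, -, rfl⟩ := Finset.mem_map.mp hw
      exact hSind a.1 (Finset.mem_of_mem_filter _ a.2) c.1 (Finset.mem_of_mem_filter _ c.2) hadj
    refine le_csSup ?_ ⟨t, htind, htcard⟩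
    exact ⟨Fintype.card {v : V | deg G v < maxDeg G},
      by rintro n ⟨s, -, rfl⟩; simpa using Finset.card_le_univ s⟩
  -- real abbreviations
  set lam : ℝ := lapMax G with hlamdef
  set Δr : ℝ := ((maxDeg G : ℕ) : ℝ) with hΔrdef
  set δr : ℝ := ((minDeg G : ℕ) : ℝ) with hδrdef
  set nr : ℝ := ((Fintype.card V : ℕ) : ℝ) with hnrdef
  have hnr1 : (1:ℝ) ≤ nr := by rw [hnrdef]; exact_mod_cast Fintype.card_pos
  have hnr0 : (0:ℝ) < nr := lt_of_lt_of_le one_pos hnr1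
  have hδΔr : δr ≤ Δr := by rw [hδrdef, hΔrdef]; exact_mod_cast hδΔ
  have hΔ1r : (1:ℝ) ≤ Δr := by rw [hΔrdef]; exact_mod_cast hΔ1
  have hApos : (0:ℝ) < lam - Δr := by linarith [hlamΔ]
  have hBpos : (0:ℝ) < lam - δr := by linarith
  have hlampos : (0:ℝ) < lam := by linarith
  set a : ℝ := (lam - Δr)⁻¹ with hadef
  set b : ℝ := (lam - δr)⁻¹ with hbdef
  have hapos : 0 < a := inv_pos.mpr hApos
  have hbpos : 0 < b := inv_pos.mpr hBpos
  set x : V → ℝ := fun u => if u ∈ S1 then a else if u ∈ S2 then b else 0 with hxdef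
  have hx0 : ∀ v, v ∉ S → x v = 0 := by
    intro v hv
    have h1 : v ∉ S1 := fun h => hv (Finset.mem_of_mem_filter _ h)
    have h2 : v ∉ S2 := fun h => hv (Finset.mem_of_mem_filter _ h)
    simp [hxdef, h1, h2]
  have hd12 : Disjoint S2 S1 := Finset.disjoint_filter_filter_not S S _
  have hxS1 : ∀ v ∈ S1, x v = a := fun v hv => by simp [hxdef, hv]
  have hxS2 : ∀ v ∈ S2, x v = b := by
    intro v hv
    have h1 : v ∉ S1 := Finset.disjoint_left.mp hd12 hv
    simp [hxdef, h1, hv]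
  set p : ℝ := ((S1.card : ℕ) : ℝ) with hpdef
  set q : ℝ := ((S2.card : ℕ) : ℝ) with hqdef
  have hp0 : 0 ≤ p := by rw [hpdef]; positivity
  have hq0 : 0 ≤ q := by rw [hqdef]; positivity
  have hsplit : ∀ g : V → ℝ, (∀ v, v ∉ S → g v = 0) →
      ∑ i, g i = ∑ i ∈ S1, g i + ∑ i ∈ S2, g i := by
    intro g hg
    rw [← Finset.sum_union hd12.symm]
    symm
    apply Finset.sum_subset (Finset.subset_univ _)
    intro i _ hi
    apply hg
    intro hiS
    apply hi
    rw [Finset.mem_union, hS1def, hS2def, Finset.mem_filter, Finset.mem_filter]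
    by_cases h : deg G i < maxDeg G
    · exact Or.inr ⟨hiS, h⟩
    · exact Or.inl ⟨hiS, h⟩
  have hsx : ∑ i, x i = p * a + q * b := by
    rw [hsplit x hx0, Finset.sum_congr rfl hxS1, Finset.sum_congr rfl hxS2,
      Finset.sum_const, Finset.sum_const, nsmul_eq_mul, nsmul_eq_mul]
  have hsx2 : x ⬝ᵥ x = p * a^2 + q * b^2 := by
    have h0 : ∀ v, v ∉ S → x v * x v = 0 := fun v hv => by rw [hx0 v hv, mul_zero]
    have h1 : ∑ i ∈ S1, x i * x i = ∑ _i ∈ S1, a * a :=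
      Finset.sum_congr rfl fun v hv => by rw [hxS1 v hv]
    have h2 : ∑ i ∈ S2, x i * x i = ∑ _i ∈ S2, b * b :=
      Finset.sum_congr rfl fun v hv => by rw [hxS2 v hv]
    rw [dotProduct, hsplit _ h0, h1, h2, Finset.sum_const, Finset.sum_const,
      nsmul_eq_mul, nsmul_eq_mul]
    ring
  have hdegsum : p * (Δr * a^2) + q * (δr * b^2) ≤ ∑ i, (G.degree i : ℝ) * x i ^ 2 := by
    rw [hsplit (fun i => (G.degree i : ℝ) * x i ^ 2)
      (fun v hv => by rw [hx0 v hv]; ring)]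
    have h1 : ∑ i ∈ S1, (G.degree i : ℝ) * x i ^ 2 = p * (Δr * a^2) := by
      rw [Finset.sum_congr rfl (fun v hv => by
        rw [hxS1 v hv, ← hdd v, hS1deg v hv, ← hΔrdef]), Finset.sum_const, nsmul_eq_mul]
    have h2 : q * (δr * b^2) ≤ ∑ i ∈ S2, (G.degree i : ℝ) * x i ^ 2 := by
      have : ∀ v ∈ S2, δr * b^2 ≤ (G.degree v : ℝ) * x v ^ 2 := by
        intro v hv
        rw [hxS2 v hv]
        have hδv : δr ≤ (G.degree v : ℝ) := by
          rw [hδrdef, ← hdd v]; exact_mod_cast hmin_le v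
        have : (0:ℝ) ≤ b^2 := sq_nonneg b
        nlinarith
      calc q * (δr * b^2) = ∑ _v ∈ S2, δr * b^2 := by
            rw [Finset.sum_const, nsmul_eq_mul]
        _ ≤ _ := Finset.sum_le_sum this
    linarith
  -- spectral inequality
  have hlow := edge_sum_eq G S hSind x hx0
  have hquadeq : x ⬝ᵥ (G.lapMatrix ℝ *ᵥ x) = ∑ i, (G.degree i : ℝ) * x i ^ 2 := by
    rw [← Matrix.toLinearMap₂'_apply', SimpleGraph.lapMatrix_toLinearMap₂', hlow]
    ring
  have hshift := lap_shift G lam hlam_ge x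
  have hkey : p * (Δr * a^2) + q * (δr * b^2)
      ≤ lam * (p*a^2 + q*b^2 - (p*a + q*b)^2 / nr) := by
    calc p * (Δr * a^2) + q * (δr * b^2) ≤ ∑ i, (G.degree i : ℝ) * x i ^ 2 := hdegsum
      _ = x ⬝ᵥ (G.lapMatrix ℝ *ᵥ x) := hquadeq.symm
      _ ≤ lam * (x ⬝ᵥ x - (∑ i, x i)^2 / nr) := hshift
      _ = lam * (p*a^2 + q*b^2 - (p*a + q*b)^2 / nr) := by rw [hsx, hsx2]
  have ha2 : a^2 * (lam - Δr) = a := by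
    rw [hadef]; field_simp
  have hb2 : b^2 * (lam - δr) = b := by
    rw [hbdef]; field_simp
  have e1 : p * (a^2 * (lam - Δr)) = p * a := by rw [ha2]
  have e2 : q * (b^2 * (lam - δr)) = q * b := by rw [hb2]
  clear hshift hquadeq hlow hsx hsx2 hdegsum hsplit hx0 hxS1 hxS2 hd12 hxdef x
  clear hlam_ge hlam_eq hdd hbdeg hdeg_le hmin_le hvmax hS1deg hIbdd hSind hvw hdeg0
  clear_value lam Δr δr nr a b p q
  have key2 : lam * (p*a + q*b)^2 / nr ≤ p*a + q*b := by
    rw [mul_sub] at hkey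
    have h2 : lam*(p*a^2 + q*b^2) - (p*(Δr*a^2) + q*(δr*b^2))
        = p*(a^2*(lam-Δr)) + q*(b^2*(lam-δr)) := by ring
    have h3 : lam * (p*a + q*b)^2 / nr = lam * ((p*a + q*b)^2 / nr) := by ring
    linarith [e1, e2, hkey, h2, h3]
  have hm0 : 0 ≤ p*a + q*b := by positivity
  have key2' : lam * (p*a + q*b)^2 ≤ (p*a + q*b) * nr := by
    rw [div_le_iff₀ hnr0] at key2; linarith
  have key3 : p*a + q*b ≤ nr / lam := by
    rw [le_div_iff₀ hlampos]
    rcases eq_or_lt_of_le hm0 with h|h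
    · rw [← h, zero_mul]; exact hnr0.le
    · refine le_of_mul_le_mul_right ?_ h
      calc (p*a + q*b) * lam * (p*a + q*b) = lam * (p*a + q*b)^2 := by ring
        _ ≤ (p*a + q*b) * nr := key2'
        _ = nr * (p*a + q*b) := by ring
  have hfin1 : p ≤ (lam - Δr) * (nr/lam - q*b) := by
    have h2 : p*a ≤ nr/lam - q*b := by linarith
    calc p = (lam - Δr) * (p * a) := by rw [hadef]; field_simp
      _ ≤ (lam - Δr) * (nr/lam - q*b) := mul_le_mul_of_nonneg_left h2 (le_of_lt hApos)
  have heq : (lam - Δr) * (nr/lam - q*b) + q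
      = nr * (1 - Δr/lam) + q * (Δr - δr) / (lam - δr) := by
    rw [hbdef]
    field_simp
    ring
  have hq' : q ≤ ((indepNum (derived G) : ℕ) : ℝ) := by
    rw [hqdef]; exact_mod_cast hq_le
  calc ((indepNum G : ℕ) : ℝ) = p + q := by
        rw [← hScard, ← hpq, hpdef, hqdef]; push_cast; ring
    _ ≤ nr * (1 - Δr/lam) + q * (Δr - δr) / (lam - δr) := by linarith
    _ ≤ nr * (1 - Δr/lam) + ((indepNum (derived G) : ℕ) : ℝ) * (Δr - δr) / (lam - δr) := by
        gcongr
end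

section
/- Let X be a finite simple graph on n vertices with at least one edge and largest Laplacian eigenvalue λ_max. Let U be a non-empty independent set of vertices of X and let deg(U) = (1/|U|)·Σ_{v∈U} deg(v) be the average degree over U. Then |U| ≤ n(1 − deg(U)/λ_max). -/
open Finset

open Matrix

/-- Rayleigh-quotient upper bound: quadratic form of a symmetric real matrix is bounded by
the largest eigenvalue times the squared norm. -/
lemma rayleigh_upper {n : Type*} [Fintype n] [DecidableEq n] [Nonempty n]
    (A : Matrix n n ℝ) (hA : A.IsHermitian) (x : n → ℝ) :
    x ⬝ᵥ A *ᵥ x ≤ (⨆ i, hA.eigenvalues i) * (x ⬝ᵥ x) := by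
  set μ := ⨆ i, hA.eigenvalues i with hμ
  have hle : ∀ i, hA.eigenvalues i ≤ μ :=
    fun i => le_ciSup (Set.Finite.bddAbove (Set.finite_range _)) i
  have hsym : Aᵀ = A := by
    rw [← Matrix.conjTranspose_eq_transpose_of_trivial]; exact hA
  set ι : (n → ℝ) → EuclideanSpace ℝ n := fun y => (WithLp.equiv 2 _).symm y with hι
  set v : n → (n → ℝ) := fun i => hA.eigenvectorBasis i with hv
  set c : n → ℝ := fun i => (v i) ⬝ᵥ x with hc
  have hinner : ∀ (y z : n → ℝ), (inner ℝ (ι y) (ι z) : ℝ) = y ⬝ᵥ z := by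
    intro y z
    simp [PiLp.inner_apply, RCLike.inner_apply, dotProduct, mul_comm, ι]
  have hbv : ∀ i, ι (v i) = hA.eigenvectorBasis i := fun i => rfl
  have key : ∀ (z : n → ℝ), x ⬝ᵥ z = ∑ i, c i * ((v i) ⬝ᵥ z) := by
    intro z
    rw [← hinner x z, ← OrthonormalBasis.sum_inner_mul_inner hA.eigenvectorBasis (ι x) (ι z)]
    refine Finset.sum_congr rfl fun i _ => ?_
    rw [← hbv i, hinner, hinner]
    congr 1
    rw [hc]
    simp only [dotProduct]
    exact Finset.sum_congr rfl fun j _ => mul_comm _ _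
  have hAv : ∀ i, (v i) ⬝ᵥ (A *ᵥ x) = hA.eigenvalues i * c i := by
    intro i
    rw [dotProduct_mulVec, ← mulVec_transpose, hsym]
    have h2 : A *ᵥ v i = hA.eigenvalues i • v i := hA.mulVec_eigenvectorBasis i
    rw [h2, smul_dotProduct]
    rfl
  have h1 : x ⬝ᵥ A *ᵥ x = ∑ i, hA.eigenvalues i * (c i)^2 := by
    rw [key (A *ᵥ x)]
    exact Finset.sum_congr rfl fun i _ => by rw [hAv i]; ring
  have h2 : x ⬝ᵥ x = ∑ i, (c i)^2 := by
    rw [key x]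
    exact Finset.sum_congr rfl fun i _ => by rw [hc]; ring
  rw [h1, h2, Finset.mul_sum]
  exact Finset.sum_le_sum fun i _ =>
    mul_le_mul_of_nonneg_right (hle i) (sq_nonneg _)

/-- **Godsil–Newman bound**: for a nonempty independent set `U`,
`|U| ≤ n (1 - deg(U) / λ_max)` where `deg(U)` is the average degree over `U`. -/
theorem godsil_newman_average_degree_bound {V : Type*} [Fintype V] (G : SimpleGraph V)
    (hne : ∃ v w, G.Adj v w) (U : Finset V) (hUne : U.Nonempty)
    (hUind : ∀ v ∈ U, ∀ w ∈ U, ¬ G.Adj v w) :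
    (U.card : ℝ) ≤ (Fintype.card V : ℝ)
      * (1 - ((∑ v ∈ U, (deg G v : ℝ)) / (U.card : ℝ)) / lapMax G) := by
  letI := Classical.decEq V
  letI := Classical.decRel G.Adj
  haveI : Nonempty V := ⟨hUne.choose⟩
  set L := G.lapMatrix ℝ with hLdef
  have hPS := SimpleGraph.posSemidef_lapMatrix ℝ G
  have hμdef : lapMax G = ⨆ i, hPS.1.eigenvalues i := rfl
  set μ := ⨆ i, hPS.1.eigenvalues i with hμ
  have hsym : Lᵀ = L := by
    rw [← Matrix.conjTranspose_eq_transpose_of_trivial]; exact hPS.1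
  have hray : ∀ x : V → ℝ, x ⬝ᵥ L *ᵥ x ≤ μ * (x ⬝ᵥ x) := fun x =>
    rayleigh_upper L hPS.1 x
  -- degrees
  have hdeg : ∀ v, (deg G v : ℝ) = (G.degree v : ℝ) := by
    intro v
    have : deg G v = G.degree v := by
      rw [deg, ← Nat.card_coe_set_eq, Nat.card_eq_fintype_card]
      exact G.card_neighborSet_eq_degree v
    rw [this]
  -- positivity of μ
  have hμpos : 0 < μ := by
    obtain ⟨u, w, huw⟩ := hne
    set x : V → ℝ := fun t => if t = u then 1 else if t = w then -1 else 0 with hxdef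
    have hform : x ⬝ᵥ L *ᵥ x =
        (∑ i : V, ∑ j : V, if G.Adj i j then (x i - x j)^2 else 0) / 2 := by
      rw [← Matrix.toLinearMap₂'_apply', SimpleGraph.lapMatrix_toLinearMap₂']
    have hne' : u ≠ w := huw.ne
    have hbig : (4:ℝ) ≤ ∑ i : V, ∑ j : V, if G.Adj i j then (x i - x j)^2 else 0 := by
      have h1 : (4:ℝ) ≤ ∑ j : V, if G.Adj u j then (x u - x j)^2 else 0 := by
        have := Finset.single_le_sum (f := fun j => if G.Adj u j then (x u - x j)^2 else 0)
          (fun j _ => by positivity) (Finset.mem_univ w)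
        have h4 : ((1:ℝ) + 1)^2 = 4 := by norm_num
        simpa [hxdef, huw, hne', hne'.symm, h4] using this
      calc (4:ℝ) ≤ _ := h1
        _ ≤ _ :=
          Finset.single_le_sum (f := fun i => ∑ j : V, if G.Adj i j then (x i - x j)^2 else 0)
            (fun i _ => Finset.sum_nonneg fun j _ => by positivity) (Finset.mem_univ u)
    have hxx0 : (0:ℝ) ≤ x ⬝ᵥ x := Finset.sum_nonneg fun t _ => mul_self_nonneg _
    have h2 : (2:ℝ) ≤ x ⬝ᵥ L *ᵥ x := by rw [hform]; linarith
    nlinarith [hray x, h2, hxx0]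
  -- main quadratic form computation
  set k : ℝ := (U.card : ℝ) with hk
  set n : ℝ := (Fintype.card V : ℝ) with hn
  have hkpos : 0 < k := by
    rw [hk]; exact_mod_cast Finset.card_pos.mpr hUne
  have hnpos : 0 < n := by
    rw [hn]; exact_mod_cast Fintype.card_pos
  have hkn : k ≤ n := by
    rw [hk, hn]; exact_mod_cast Finset.card_le_univ U
  set c : ℝ := k / n with hcdef
  set a : V → ℝ := fun v => if v ∈ U then (1:ℝ) else 0 with ha
  set o : V → ℝ := fun _ => 1 with ho
  set x : V → ℝ := a - c • o with hx
  have hone : L *ᵥ o = 0 := SimpleGraph.lapMatrix_mulVec_const_eq_zero G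
  have hoL : o ⬝ᵥ (L *ᵥ a) = 0 := by
    rw [dotProduct_mulVec, ← mulVec_transpose, hsym, hone, zero_dotProduct]
  have haLa : a ⬝ᵥ (L *ᵥ a) = ∑ v ∈ U, (G.degree v : ℝ) := by
    have hstep : ∀ v : V, a v * (L *ᵥ a) v = if v ∈ U then (G.degree v : ℝ) else 0 := by
      intro v
      rw [SimpleGraph.lapMatrix_mulVec_apply]
      by_cases hv : v ∈ U
      · have hnbr : ∑ u ∈ G.neighborFinset v, a u = 0 := by
          refine Finset.sum_eq_zero fun u hu => ?_
          have hadj : G.Adj v u := (SimpleGraph.mem_neighborFinset G v u).mp hu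
          have : u ∉ U := fun hU => hUind v hv u hU hadj
          simp [ha, this]
        rw [hnbr, sub_zero]
        simp [ha, hv]
      · simp [ha, hv]
    rw [show a ⬝ᵥ (L *ᵥ a) = ∑ v : V, a v * (L *ᵥ a) v from rfl]
    simp_rw [hstep]
    simp
  have hquad : x ⬝ᵥ L *ᵥ x = ∑ v ∈ U, (G.degree v : ℝ) := by
    rw [hx]
    rw [mulVec_sub, mulVec_smul, hone]
    rw [sub_dotProduct, dotProduct_sub, dotProduct_sub, smul_dotProduct]
    simp only [smul_zero, dotProduct_zero, smul_eq_mul, sub_zero]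
    rw [hoL, haLa]
    ring
  -- norm computation
  have hnorm : x ⬝ᵥ x = k - k^2 / n := by
    have hterm : ∀ v : V, x v * x v = if v ∈ U then (1-c)^2 else c^2 := by
      intro v
      by_cases hv : v ∈ U <;> simp [hx, ha, ho, hv] <;> ring
    rw [show x ⬝ᵥ x = ∑ v : V, x v * x v from rfl]
    simp_rw [hterm]
    have hcompl : ((Uᶜ.card : ℝ)) = n - k := by
      rw [Finset.card_compl, Nat.cast_sub (Finset.card_le_univ U)]
    calc (∑ v : V, if v ∈ U then (1-c)^2 else c^2)
        = ∑ v ∈ U, ((1-c)^2) + ∑ v ∈ Uᶜ, (c^2) := by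
          rw [← Finset.sum_add_sum_compl U]
          congr 1
          · exact Finset.sum_congr rfl fun v hv => by simp [hv]
          · exact Finset.sum_congr rfl fun v hv => by simp [Finset.mem_compl.mp hv]
      _ = k * (1-c)^2 + (n - k) * c^2 := by
          rw [Finset.sum_const, Finset.sum_const, nsmul_eq_mul, nsmul_eq_mul, hcompl]
      _ = k - k^2/n := by
          rw [hcdef]; field_simp; ring
  -- combine
  have hS : ∑ v ∈ U, (deg G v : ℝ) ≤ μ * (k - k^2 / n) := by
    calc ∑ v ∈ U, (deg G v : ℝ) = ∑ v ∈ U, (G.degree v : ℝ) :=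
          Finset.sum_congr rfl fun v _ => hdeg v
      _ = x ⬝ᵥ L *ᵥ x := hquad.symm
      _ ≤ μ * (x ⬝ᵥ x) := hray x
      _ = μ * (k - k^2 / n) := by rw [hnorm]
  set S : ℝ := ∑ v ∈ U, (deg G v : ℝ) with hSdef
  have hkey : S ≤ (1 - k/n) * (k * μ) := by
    calc S ≤ μ * (k - k^2/n) := hS
      _ = (1 - k/n) * (k * μ) := by field_simp
  have hdivle : S / (k * μ) ≤ 1 - k/n :=
    (div_le_iff₀ (by positivity)).mpr hkey
  calc k = n * (k / n) := by field_simp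
    _ ≤ n * (1 - S / (k * μ)) := by
        apply mul_le_mul_of_nonneg_left _ (le_of_lt hnpos)
        linarith
    _ = n * (1 - (S / k) / μ) := by rw [div_div]
end

section
/- Let X be a finite simple graph on n vertices with at least one edge, with minimal degree δ, maximal degree Δ, and largest Laplacian eigenvalue λ = λ_max. Let α' be the independence number of the derived graph X'. Then the independence number α of X satisfies α ≤ (n/2)·(1 − Δ/λ + sqrt((1 − Δ/λ)² + 4α'(Δ − δ)/(nλ))). -/
open Finset
open Matrix

lemma rayleigh_le {n : Type*} [Fintype n] [DecidableEq n] {A : Matrix n n ℝ}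
    (hA : A.IsHermitian) (x : n → ℝ) :
    x ⬝ᵥ (A *ᵥ x) ≤ (⨆ i, hA.eigenvalues i) * (x ⬝ᵥ x) := by
  set U : Matrix n n ℝ := (hA.eigenvectorUnitary : Matrix n n ℝ) with hU
  set y : n → ℝ := Uᵀ *ᵥ x with hy
  have hstar : star U = Uᵀ := by
    simp [Matrix.star_eq_conjTranspose, Matrix.conjTranspose_eq_transpose_of_trivial]
  have hUU : U * Uᵀ = 1 := by
    rw [← hstar]; exact (Matrix.mem_unitaryGroup_iff).mp hA.eigenvectorUnitary.2
  have hxy : x ⬝ᵥ x = y ⬝ᵥ y := by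
    rw [hy, dotProduct_mulVec, vecMul_transpose, mulVec_mulVec, hUU, one_mulVec]
  have hquad : x ⬝ᵥ (A *ᵥ x) = ∑ i, hA.eigenvalues i * (y i)^2 := by
    conv_lhs => rw [hA.spectral_theorem]
    rw [Unitary.conjStarAlgAut_apply, ← hU]
    rw [hstar, ← mulVec_mulVec, ← mulVec_mulVec, dotProduct_mulVec, ← mulVec_transpose, ← hy]
    simp only [dotProduct, mulVec_diagonal, Function.comp]
    refine Finset.sum_congr rfl fun i _ => ?_
    simp [RCLike.ofReal]
    ring
  have hbdd : BddAbove (Set.range hA.eigenvalues) := Set.Finite.bddAbove (Set.finite_range _)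
  rw [hquad, hxy]
  have h2 : (⨆ i, hA.eigenvalues i) * (y ⬝ᵥ y) = ∑ i, (⨆ i, hA.eigenvalues i) * (y i)^2 := by
    rw [dotProduct, Finset.mul_sum]
    exact Finset.sum_congr rfl fun i _ => by ring
  rw [h2]
  by_cases hn : Nonempty n
  · exact Finset.sum_le_sum fun i _ => by
      have := le_ciSup hbdd i
      nlinarith [sq_nonneg (y i)]
  · simp [Finset.univ_eq_empty_iff.mpr (not_nonempty_iff.mp hn)]

/-- The cut bound: for an independent set `S`,
`n * Σ_{v∈S} deg v ≤ λ * |S| * (n - |S|)`. -/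
lemma cut_bound {V : Type*} [Fintype V] [DecidableEq V] (G : SimpleGraph V)
    [DecidableRel G.Adj] (S : Finset V)
    (hS : ∀ v ∈ S, ∀ w ∈ S, ¬ G.Adj v w) (hn : 0 < Fintype.card V) :
    (Fintype.card V : ℝ) * ∑ v ∈ S, (G.degree v : ℝ) ≤
      (⨆ i, (SimpleGraph.posSemidef_lapMatrix ℝ G).1.eigenvalues i)
        * ((S.card : ℝ) * ((Fintype.card V : ℝ) - S.card)) := by
  set nr : ℝ := (Fintype.card V : ℝ) with hnr
  set sr : ℝ := (S.card : ℝ) with hsr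
  set x : V → ℝ := fun v => if v ∈ S then nr - sr else -sr with hx
  have hray := rayleigh_le (SimpleGraph.posSemidef_lapMatrix ℝ G).1 x
  -- the quadratic form
  have hq : x ⬝ᵥ (G.lapMatrix ℝ *ᵥ x)
      = (∑ i, ∑ j, if G.Adj i j then (x i - x j)^2 else 0) / 2 := by
    rw [← Matrix.toLinearMap₂'_apply', SimpleGraph.lapMatrix_toLinearMap₂']
  have hrow1 : ∀ i ∈ S, (∑ j, if G.Adj i j then (x i - x j)^2 else 0)
      = (G.degree i : ℝ) * nr^2 := by
    intro i hi
    have : ∀ j : V, (if G.Adj i j then (x i - x j)^2 else 0)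
        = (if G.Adj i j then nr^2 else 0) := by
      intro j
      by_cases h : G.Adj i j
      · have hj : j ∉ S := fun hj => hS i hi j hj h
        rw [if_pos h, if_pos h, hx]
        simp only [if_pos hi, if_neg hj]
        ring_nf
      · simp [h]
    rw [Finset.sum_congr rfl fun j _ => this j, ← Finset.sum_filter,
      ← SimpleGraph.neighborFinset_eq_filter, Finset.sum_const, nsmul_eq_mul,
      SimpleGraph.card_neighborFinset_eq_degree]
  have hrow2 : ∀ i ∈ Sᶜ, (∑ j, if G.Adj i j then (x i - x j)^2 else 0)
      = ∑ j ∈ S, (if G.Adj i j then nr^2 else 0) := by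
    intro i hi
    rw [Finset.mem_compl] at hi
    rw [← Finset.sum_add_sum_compl S]
    have h2 : ∀ j ∈ Sᶜ, (if G.Adj i j then (x i - x j)^2 else 0) = 0 := by
      intro j hj
      rw [Finset.mem_compl] at hj
      have : x i - x j = 0 := by rw [hx]; simp [if_neg hi, if_neg hj]
      rw [this]; simp
    rw [Finset.sum_eq_zero h2, add_zero]
    refine Finset.sum_congr rfl fun j hj => ?_
    by_cases h : G.Adj i j
    · rw [if_pos h, if_pos h, hx]
      simp only [if_neg hi, if_pos hj]
      ring_nf
    · simp [h]
  have hcol : ∀ j ∈ S, (∑ i ∈ Sᶜ, if G.Adj i j then nr^2 else 0)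
      = (G.degree j : ℝ) * nr^2 := by
    intro j hj
    have h0 : (∑ i ∈ S, if G.Adj i j then nr^2 else 0) = 0 :=
      Finset.sum_eq_zero fun i hi => if_neg (hS i hi j hj)
    have hsplit := Finset.sum_add_sum_compl S (fun i => if G.Adj i j then nr^2 else 0)
    rw [h0, zero_add] at hsplit
    rw [hsplit]
    have : ∀ i : V, (if G.Adj i j then nr^2 else 0) = (if G.Adj j i then nr^2 else 0) :=
      fun i => by simp only [G.adj_comm i j]
    rw [Finset.sum_congr rfl fun i _ => this i, ← Finset.sum_filter,
      ← SimpleGraph.neighborFinset_eq_filter, Finset.sum_const, nsmul_eq_mul,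
      SimpleGraph.card_neighborFinset_eq_degree]
  have hF : (∑ i, ∑ j, if G.Adj i j then (x i - x j)^2 else 0)
      = 2 * nr^2 * ∑ v ∈ S, (G.degree v : ℝ) := by
    rw [← Finset.sum_add_sum_compl S (fun i => ∑ j, if G.Adj i j then (x i - x j)^2 else 0)]
    rw [Finset.sum_congr rfl hrow1, Finset.sum_congr rfl hrow2, Finset.sum_comm]
    rw [Finset.sum_congr rfl hcol, ← Finset.sum_mul]
    ring
  -- the norm
  have hxx : x ⬝ᵥ x = sr * (nr - sr) * nr := by
    rw [dotProduct, ← Finset.sum_add_sum_compl S (fun i => x i * x i)]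
    have h1 : ∀ i ∈ S, x i * x i = (nr - sr)^2 := by
      intro i hi; rw [hx]; simp only [if_pos hi]; ring
    have h2 : ∀ i ∈ Sᶜ, x i * x i = sr^2 := by
      intro i hi; rw [Finset.mem_compl] at hi
      rw [hx]; simp only [if_neg hi]; ring
    rw [Finset.sum_congr rfl h1, Finset.sum_congr rfl h2, Finset.sum_const, Finset.sum_const,
      Finset.card_compl, nsmul_eq_mul, nsmul_eq_mul]
    have hcle : S.card ≤ Fintype.card V := Finset.card_le_univ S
    have : ((Fintype.card V - S.card : ℕ) : ℝ) = nr - sr := by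
      rw [Nat.cast_sub hcle]
    rw [this]
    ring
  rw [hq, hF, hxx] at hray
  have hnpos : (0:ℝ) < nr := by rw [hnr]; exact_mod_cast hn
  nlinarith [hray]

lemma deg_eq {V : Type*} [Fintype V] (G : SimpleGraph V) [DecidableRel G.Adj] (v : V) :
    deg G v = G.degree v := by
  rw [deg, ← Nat.card_coe_set_eq, Nat.card_eq_fintype_card,
    SimpleGraph.card_neighborSet_eq_degree]


set_option maxHeartbeats 1000000 in
/-- **Godsil–Newman-type bound**: the independence number satisfies
`α ≤ (n/2) (1 - Δ/λ + sqrt((1 - Δ/λ)² + 4 α' (Δ - δ)/(n λ)))`. -/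
theorem godsil_newman_type_bound {V : Type*} [Fintype V] (G : SimpleGraph V)
    (hne : ∃ v w, G.Adj v w) :
    (indepNum G : ℝ) ≤ (Fintype.card V : ℝ) / 2
      * (1 - (maxDeg G : ℝ) / lapMax G
        + Real.sqrt ((1 - (maxDeg G : ℝ) / lapMax G) ^ 2
          + 4 * (indepNum (derived G) : ℝ) * ((maxDeg G : ℝ) - (minDeg G : ℝ))
            / ((Fintype.card V : ℝ) * lapMax G))) := by
  letI := Classical.decEq V
  letI := Classical.decRel G.Adj
  obtain ⟨v₀, w₀, hvw⟩ := hne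
  have hn : 0 < Fintype.card V := Fintype.card_pos_iff.mpr ⟨v₀⟩
  set n : ℝ := (Fintype.card V : ℝ) with hnn
  set lam : ℝ := lapMax G with hlam
  set Δr : ℝ := (maxDeg G : ℝ) with hΔr
  set δr : ℝ := (minDeg G : ℝ) with hδr
  set αr : ℝ := (indepNum G : ℝ) with hαr
  set α'r : ℝ := (indepNum (derived G) : ℝ) with hα'r
  have hnpos : (0:ℝ) < n := by rw [hnn]; exact_mod_cast hn
  have hlamdef : lam = ⨆ i, (SimpleGraph.posSemidef_lapMatrix ℝ G).1.eigenvalues i := rfl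
  -- basic degree facts
  have hdeg_eq : ∀ v, deg G v = G.degree v := deg_eq G
  have hΔ : ∀ v, G.degree v ≤ maxDeg G := fun v =>
    hdeg_eq v ▸ le_csSup (Set.Finite.bddAbove (Set.finite_range _)) ⟨v, rfl⟩
  have hδ : ∀ v, minDeg G ≤ G.degree v := fun v => hdeg_eq v ▸ Nat.sInf_le ⟨v, rfl⟩
  have hδΔ : δr ≤ Δr := by
    rw [hδr, hΔr]
    exact_mod_cast le_trans (hδ v₀) (hΔ v₀)
  -- lam > 0
  have hlampos : (0:ℝ) < lam := by
    have hind : ∀ v ∈ ({v₀} : Finset V), ∀ w ∈ ({v₀} : Finset V), ¬ G.Adj v w := by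
      intro v hv w hw
      rw [Finset.mem_singleton] at hv hw
      subst hv; subst hw
      exact G.loopless.irrefl _
    have hcut := cut_bound G {v₀} hind hn
    rw [← hlamdef, ← hnn] at hcut
    simp only [Finset.sum_singleton, Finset.card_singleton, Nat.cast_one] at hcut
    have hd : (1:ℝ) ≤ (G.degree v₀ : ℝ) := by
      exact_mod_cast G.degree_pos_iff_exists_adj v₀ |>.mpr ⟨w₀, hvw⟩
    have hn1 : (0:ℝ) ≤ n - 1 := by
      have : 1 ≤ Fintype.card V := hn
      rw [hnn]; linarith [show (1:ℝ) ≤ (Fintype.card V:ℝ) by exact_mod_cast this]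
    by_contra h
    push_neg at h
    nlinarith [mul_nonpos_of_nonpos_of_nonneg h hn1]
  have hlamne : lam ≠ 0 := ne_of_gt hlampos
  have hnne : n ≠ 0 := ne_of_gt hnpos
  -- extract a maximum independent set
  have hbddA : BddAbove {m | ∃ s : Finset V, (∀ v ∈ s, ∀ w ∈ s, ¬ G.Adj v w) ∧ s.card = m} :=
    ⟨Fintype.card V, fun m ⟨s, _, hc⟩ => hc ▸ Finset.card_le_univ s⟩
  have hAne : Set.Nonempty {m | ∃ s : Finset V, (∀ v ∈ s, ∀ w ∈ s, ¬ G.Adj v w) ∧ s.card = m} :=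
    ⟨0, ∅, by simp, Finset.card_empty⟩
  obtain ⟨S, hSind, hScard⟩ := Nat.sSup_mem hAne hbddA
  have hScard' : S.card = indepNum G := hScard
  have hαS : αr = (S.card : ℝ) := by rw [hαr, ← hScard']
  -- the low-degree part of S maps into the derived graph
  have hbdd' : BddAbove {m | ∃ s : Finset ↥{v : V | deg G v < maxDeg G},
      (∀ v ∈ s, ∀ w ∈ s, ¬ (derived G).Adj v w) ∧ s.card = m} := by
    haveI : Fintype ↥{v : V | deg G v < maxDeg G} := Fintype.ofFinite _
    exact ⟨Fintype.card ↥{v : V | deg G v < maxDeg G},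
      fun m ⟨s, _, hc⟩ => hc ▸ Finset.card_le_univ s⟩
  have hk : (S.filter (fun v => deg G v < maxDeg G)).card ≤ indepNum (derived G) := by
    have hmemT : ∀ v ∈ S.filter (fun v => deg G v < maxDeg G), deg G v < maxDeg G :=
      fun v hv => (Finset.mem_filter.mp hv).2
    refine le_csSup hbdd' ⟨(S.filter (fun v => deg G v < maxDeg G)).attach.map
        ⟨fun y => (⟨y.1, hmemT y.1 y.2⟩ : ↥{v : V | deg G v < maxDeg G}),
          fun a b h => by apply Subtype.ext; have h' := congrArg Subtype.val h; exact h'⟩, ?_, ?_⟩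
    · intro a ha b hb hadj
      simp only [Finset.mem_map, Finset.mem_attach, true_and] at ha hb
      obtain ⟨⟨va, hva⟩, rfl⟩ := ha
      obtain ⟨⟨vb, hvb⟩, rfl⟩ := hb
      have hGadj : G.Adj va vb := hadj
      exact hSind va (Finset.mem_of_mem_filter _ hva) vb (Finset.mem_of_mem_filter _ hvb) hGadj
    · rw [Finset.card_map, Finset.card_attach]
  have hkr : ((S.filter (fun v => deg G v < maxDeg G)).card : ℝ) ≤ α'r := by
    rw [hα'r]; exact_mod_cast hk
  have hα'0 : (0:ℝ) ≤ α'r := by rw [hα'r]; positivity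
  -- sum of degrees over S is large
  have hsumlb : Δr * αr - (Δr - δr) * α'r ≤ ∑ v ∈ S, (G.degree v : ℝ) := by
    have hsplit := Finset.sum_filter_add_sum_filter_not S (fun v => deg G v < maxDeg G)
      (fun v => (G.degree v : ℝ))
    have h1 : ((S.filter (fun v => deg G v < maxDeg G)).card : ℝ) * δr ≤
        ∑ v ∈ S.filter (fun v => deg G v < maxDeg G), (G.degree v : ℝ) := by
      have := Finset.card_nsmul_le_sum (S.filter (fun v => deg G v < maxDeg G))
        (fun v => (G.degree v : ℝ)) δr (fun v _ => by
          show δr ≤ (G.degree v : ℝ)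
          rw [hδr]; exact_mod_cast hδ v)
      rwa [nsmul_eq_mul] at this
    have h2 : ((S.filter (fun v => ¬ deg G v < maxDeg G)).card : ℝ) * Δr ≤
        ∑ v ∈ S.filter (fun v => ¬ deg G v < maxDeg G), (G.degree v : ℝ) := by
      have := Finset.card_nsmul_le_sum (S.filter (fun v => ¬ deg G v < maxDeg G))
        (fun v => (G.degree v : ℝ)) Δr (fun v hv => by
          show Δr ≤ (G.degree v : ℝ)
          have h3 : maxDeg G ≤ deg G v := le_of_not_gt (Finset.mem_filter.mp hv).2
          rw [hdeg_eq] at h3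
          rw [hΔr]; exact_mod_cast h3)
      rwa [nsmul_eq_mul] at this
    have hcards : ((S.filter (fun v => deg G v < maxDeg G)).card : ℝ)
        + ((S.filter (fun v => ¬ deg G v < maxDeg G)).card : ℝ) = αr := by
      rw [hαS]
      exact_mod_cast congrArg (Nat.cast (R := ℝ))
        (Finset.card_filter_add_card_filter_not (s := S)
          (p := fun v => deg G v < maxDeg G))
    nlinarith [mul_nonneg (sub_nonneg.mpr hδΔ)
      (sub_nonneg.mpr hkr), hsplit, h1, h2]
  -- the main cut inequality
  have hcut := cut_bound G S hSind hn
  rw [← hlamdef, ← hnn, ← hαS] at hcut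
  have hmain : n * (Δr * αr - (Δr - δr) * α'r) ≤ lam * (αr * (n - αr)) :=
    le_trans (mul_le_mul_of_nonneg_left hsumlb hnpos.le) hcut
  -- final algebra
  set t : ℝ := 1 - Δr / lam with ht
  set c : ℝ := 4 * α'r * (Δr - δr) / (n * lam) with hc
  have htl : lam * t = lam - Δr := by rw [ht]; field_simp
  have hcnl : n * lam * c = 4 * α'r * (Δr - δr) := by rw [hc]; field_simp
  have hc0 : 0 ≤ c := by
    rw [hc]
    apply div_nonneg
    · have := sub_nonneg.mpr hδΔ
      positivity
    · positivity
  have hq : lam * αr^2 ≤ lam * (n * t * αr + n^2 * c / 4) := by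
    have e1 : lam * (n * t * αr) = (lam - Δr) * (n * αr) := by
      rw [show lam * (n * t * αr) = (lam * t) * (n * αr) by ring, htl]
    have e2 : lam * (n^2 * c / 4) = n * α'r * (Δr - δr) := by
      rw [show lam * (n^2 * c / 4) = (n * lam * c) * (n / 4) by ring, hcnl]
      ring
    rw [mul_add, e1, e2]
    nlinarith [hmain]
  have hq2 : αr^2 ≤ n * t * αr + n^2 * c / 4 := le_of_mul_le_mul_left hq hlampos
  have hkey : (αr - n * t / 2)^2 ≤ (n/2)^2 * (t^2 + c) := by nlinarith [hq2]
  have h1 := Real.sqrt_le_sqrt hkey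
  rw [Real.sqrt_sq_eq_abs] at h1
  have h2 : Real.sqrt ((n/2)^2 * (t^2 + c)) = (n/2) * Real.sqrt (t^2 + c) := by
    rw [Real.sqrt_mul (sq_nonneg _), Real.sqrt_sq (by positivity : (0:ℝ) ≤ n/2)]
  rw [h2] at h1
  have h3 : αr - n * t / 2 ≤ |αr - n * t / 2| := le_abs_self _
  have h4 : n / 2 * (t + Real.sqrt (t^2 + c)) = n * t / 2 + n / 2 * Real.sqrt (t^2 + c) := by
    ring
  rw [h4]
  linarith
end

section
/- Let n, δ, Δ, λ, α' be real numbers with n > 0, 0 ≤ δ ≤ Δ < λ, and 0 ≤ α' ≤ n(1 − δ/λ). Then n(1 − Δ/λ) + α'(Δ − δ)/(λ − δ) ≤ (n/2)·(1 − Δ/λ + sqrt((1 − Δ/λ)² + 4α'(Δ − δ)/(nλ))) ≤ n(1 − δ/λ). In other words, the relative bound is at most the Godsil–Newman-type bound, which in turn is at most the Hoffman-type bound. -/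
set_option maxHeartbeats 1000000


/-- The relative bound is at most the Godsil–Newman-type bound, which in turn is
at most the Hoffman-type bound. -/
theorem relative_le_GN_le_hoffman (n δ Δ lam α' : ℝ)
    (hn : 0 < n) (hδ : 0 ≤ δ) (hδΔ : δ ≤ Δ) (hΔlam : Δ < lam)
    (hα0 : 0 ≤ α') (hα : α' ≤ n * (1 - δ / lam)) :
    n * (1 - Δ / lam) + α' * (Δ - δ) / (lam - δ)
        ≤ n / 2 * (1 - Δ / lam
          + Real.sqrt ((1 - Δ / lam) ^ 2 + 4 * α' * (Δ - δ) / (n * lam))) ∧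
      n / 2 * (1 - Δ / lam
          + Real.sqrt ((1 - Δ / lam) ^ 2 + 4 * α' * (Δ - δ) / (n * lam)))
        ≤ n * (1 - δ / lam) := by
  have hlam : 0 < lam := lt_of_le_of_lt (hδ.trans hδΔ) hΔlam
  have hld : 0 < lam - δ := by linarith
  have hdd : 0 ≤ Δ - δ := by linarith
  have ha : 0 < 1 - Δ / lam := by
    rw [sub_pos, div_lt_one hlam]; exact hΔlam
  have hab : 1 - Δ / lam ≤ 1 - δ / lam := by
    have h : δ / lam ≤ Δ / lam := by gcongr
    linarith
  have ht : 0 ≤ 4 * α' * (Δ - δ) / (n * lam) := by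
    apply div_nonneg
    · positivity
    · positivity
  have hαl : α' * lam ≤ n * (lam - δ) := by
    have h := mul_le_mul_of_nonneg_right hα hlam.le
    have he : n * (1 - δ / lam) * lam = n * (lam - δ) := by field_simp
    linarith [h, he]
  set s := Real.sqrt ((1 - Δ / lam) ^ 2 + 4 * α' * (Δ - δ) / (n * lam)) with hs
  have hs0 : 0 ≤ s := Real.sqrt_nonneg _
  have hs2 : s ^ 2 = (1 - Δ / lam) ^ 2 + 4 * α' * (Δ - δ) / (n * lam) :=
    Real.sq_sqrt (by positivity)
  clear_value s
  constructor
  · have hL0 : 0 ≤ n * (1 - Δ / lam) / 2 + α' * (Δ - δ) / (lam - δ) := by positivity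
    have key : (n * (1 - Δ / lam) / 2 + α' * (Δ - δ) / (lam - δ)) ^ 2 ≤ (n / 2 * s) ^ 2 := by
      rw [mul_pow, hs2]
      have e1 : n * (1 - Δ / lam) / 2 + α' * (Δ - δ) / (lam - δ)
          = (n * (lam - Δ) * (lam - δ) + 2 * lam * (α' * (Δ - δ))) / (2 * lam * (lam - δ)) := by
        field_simp
      have e2 : (n / 2) ^ 2 * ((1 - Δ / lam) ^ 2 + 4 * α' * (Δ - δ) / (n * lam))
          = (n * (lam - Δ) ^ 2 + 4 * lam * (α' * (Δ - δ))) * n / (4 * lam ^ 2) := by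
        field_simp; ring
      rw [e1, e2, div_pow, div_le_div_iff₀ (by positivity) (by positivity)]
      nlinarith [mul_nonneg (mul_nonneg (mul_nonneg hlam.le hα0) (sq_nonneg (Δ - δ)))
        (sub_nonneg.mpr hαl)]
    nlinarith [key, hL0, hs0, mul_nonneg (by positivity : (0:ℝ) ≤ n/2) hs0]
  · have hba : 0 ≤ 2 * (1 - δ / lam) - (1 - Δ / lam) := by linarith
    have hsq : (1 - Δ / lam) ^ 2 + 4 * α' * (Δ - δ) / (n * lam)
        ≤ (2 * (1 - δ / lam) - (1 - Δ / lam)) ^ 2 := by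
      have h1 : 4 * α' * (Δ - δ) / (n * lam) ≤ 4 * (1 - δ / lam) * ((Δ - δ) / lam) := by
        rw [div_le_iff₀ (by positivity)]
        have h2 : 4 * (1 - δ / lam) * ((Δ - δ) / lam) * (n * lam) = 4 * (n * (1 - δ / lam)) * (Δ - δ) := by
          field_simp
        rw [h2]
        nlinarith [mul_le_mul_of_nonneg_right hα hdd]
      have h4 : 4 * α' * (Δ - δ) / (n * lam)
          ≤ 4 * (1 - δ / lam) * ((1 - δ / lam) - (1 - Δ / lam)) := by
        have h3 : (Δ - δ) / lam = (1 - δ / lam) - (1 - Δ / lam) := by field_simp; ring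
        rw [← h3]; exact h1
      have e : (2 * (1 - δ / lam) - (1 - Δ / lam)) ^ 2
          = (1 - Δ / lam) ^ 2 + 4 * (1 - δ / lam) * ((1 - δ / lam) - (1 - Δ / lam)) := by ring
      linarith [h4, e]
    have hsle : s ≤ 2 * (1 - δ / lam) - (1 - Δ / lam) := by
      calc s = Real.sqrt ((1 - Δ / lam) ^ 2 + 4 * α' * (Δ - δ) / (n * lam)) := hs
        _ ≤ Real.sqrt ((2 * (1 - δ / lam) - (1 - Δ / lam)) ^ 2) := Real.sqrt_le_sqrt hsq
        _ = 2 * (1 - δ / lam) - (1 - Δ / lam) := Real.sqrt_sq hba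
    have := mul_le_mul_of_nonneg_left hsle (by positivity : (0:ℝ) ≤ n / 2)
    linarith [this]
end

section
/- Let a ≥ 1, b ≥ 2, k ≥ 2 be integers, let n = a + b, and let X be the complete split graph on n vertices given by the join of the complete graph K_a with the empty graph on b vertices. Let P_{2k} be the path graph on 2k vertices. Then the independence number of the Cartesian product satisfies α(X □ P_{2k}) ≤ bk + 2b + 3k. -/
open Finset

/-- The complete split graph `K_a ∨ b K_1`: a clique of size `a` joined to an
independent set of size `b`; two distinct vertices are adjacent exactly when at
least one of them lies in the clique part. -/
def completeSplitGraph (a b : ℕ) : SimpleGraph (Fin a ⊕ Fin b) where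
  Adj u v := u ≠ v ∧ (u.isLeft ∨ v.isLeft)
  symm := ⟨by rintro u v ⟨h1, h2⟩; exact ⟨h1.symm, h2.symm⟩⟩
  loopless := ⟨by rintro u ⟨h, -⟩; exact h rfl⟩

private lemma sum_range_two_mul (f : ℕ → ℕ) (k : ℕ) :
    ∑ i ∈ Finset.range (2*k), f i = ∑ j ∈ Finset.range k, (f (2*j) + f (2*j+1)) := by
  induction k with
  | zero => simp
  | succ k ih =>
    have h2 : 2 * (k+1) = (2*k + 1) + 1 := by ring
    rw [h2, Finset.sum_range_succ, Finset.sum_range_succ, Finset.sum_range_succ, ih]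
    ring

/-- The independence number of the Cartesian product of the complete split graph
`K_a ∨ b K_1` with the path graph `P_{2k}` is at most `bk + 2b + 3k`. -/
theorem indepNum_completeSplit_boxProd_path (a b k : ℕ)
    (ha : 1 ≤ a) (hb : 2 ≤ b) (hk : 2 ≤ k) :
    indepNum ((completeSplitGraph a b).boxProd (SimpleGraph.pathGraph (2 * k)))
      ≤ b * k + 2 * b + 3 * k := by
  classical
  apply csSup_le
  · exact ⟨0, ∅, by simp, by simp⟩
  rintro m ⟨s, hs, rfl⟩
  set T : ℕ → Finset ((Fin a ⊕ Fin b) × Fin (2*k)) :=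
    fun i => s.filter (fun p => (p.2 : ℕ) = i) with hT
  have hmemT : ∀ i p, p ∈ T i → p ∈ s ∧ ((p.2 : ℕ) = i) := by
    intro i p hp; simpa [hT] using hp
  have hsub : ∀ i, ∀ p ∈ T i, ∀ q ∈ T i, p.1 = q.1 → p = q := by
    intro i p hp q hq h
    obtain ⟨hps, hpi⟩ := hmemT i p hp
    obtain ⟨hqs, hqi⟩ := hmemT i q hq
    exact Prod.ext h (Fin.ext (hpi.trans hqi.symm))
  have hGadj : ∀ p ∈ s, ∀ q ∈ s, p.2 = q.2 → ¬ (completeSplitGraph a b).Adj p.1 q.1 := by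
    intro p hp q hq h2 hadj
    exact hs p hp q hq (SimpleGraph.boxProd_adj.mpr (Or.inl ⟨hadj, h2⟩))
  -- a layer containing a clique vertex has at most one element
  have hone : ∀ i, ∀ p ∈ T i, p.1.isLeft → (T i).card ≤ 1 := by
    intro i p hp hpl
    have hsing : T i ⊆ {p} := by
      intro q hq
      rw [Finset.mem_singleton]
      by_contra hne
      have h1 : p.1 ≠ q.1 := fun h => hne ((hsub i p hp q hq h).symm)
      obtain ⟨hps, hpi⟩ := hmemT i p hp
      obtain ⟨hqs, hqi⟩ := hmemT i q hq
      have h2 : p.2 = q.2 := Fin.ext (hpi.trans hqi.symm)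
      exact hGadj p hps q hqs h2 ⟨h1, Or.inl hpl⟩
    calc (T i).card ≤ ({p} : Finset _).card := Finset.card_le_card hsing
      _ = 1 := Finset.card_singleton p
  have himg : ∀ i, (T i).card = ((T i).image Prod.fst).card := by
    intro i
    exact (Finset.card_image_of_injOn (fun p hp q hq h => hsub i p hp q hq h)).symm
  have hinr : ∀ i, (∀ p ∈ T i, ¬ p.1.isLeft) →
      (T i).image Prod.fst ⊆ Finset.univ.image Sum.inr := by
    intro i hL x hx
    obtain ⟨p, hp, rfl⟩ := Finset.mem_image.mp hx
    obtain ⟨y, hy⟩ := Sum.isRight_iff.mp (Sum.not_isLeft.mp (hL p hp))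
    rw [hy]
    exact Finset.mem_image.mpr ⟨y, Finset.mem_univ y, rfl⟩
  have hbcard : (Finset.univ.image (Sum.inr : Fin b → Fin a ⊕ Fin b)).card = b := by
    rw [Finset.card_image_of_injective _ Sum.inr_injective, Finset.card_univ,
      Fintype.card_fin]
  -- every layer has at most b elements
  have hB : ∀ i, (T i).card ≤ b := by
    intro i
    by_cases hL : ∃ p ∈ T i, p.1.isLeft
    · obtain ⟨p, hp, hpl⟩ := hL
      exact le_trans (hone i p hp hpl) (by omega)
    · push_neg at hL
      rw [himg i]
      exact le_trans (Finset.card_le_card (hinr i hL)) hbcard.le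
  -- consecutive pairs of layers contribute at most b + 1
  have hpair : ∀ j, (T (2*j)).card + (T (2*j+1)).card ≤ b + 1 := by
    intro j
    by_cases h0 : ∃ p ∈ T (2*j), p.1.isLeft
    · obtain ⟨p, hp, hpl⟩ := h0
      have h1 := hone _ p hp hpl
      have h2 := hB (2*j+1)
      omega
    by_cases h1 : ∃ p ∈ T (2*j+1), p.1.isLeft
    · obtain ⟨p, hp, hpl⟩ := h1
      have h1' := hone _ p hp hpl
      have h2 := hB (2*j)
      omega
    push_neg at h0 h1
    have hdisj : Disjoint ((T (2*j)).image Prod.fst) ((T (2*j+1)).image Prod.fst) := by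
      rw [Finset.disjoint_left]
      intro x hx0 hx1
      obtain ⟨p, hp, hpx⟩ := Finset.mem_image.mp hx0
      obtain ⟨q, hq, hqx⟩ := Finset.mem_image.mp hx1
      obtain ⟨hps, hpi⟩ := hmemT _ p hp
      obtain ⟨hqs, hqi⟩ := hmemT _ q hq
      have hadj : (SimpleGraph.pathGraph (2*k)).Adj p.2 q.2 := by
        rw [SimpleGraph.pathGraph_adj]
        left; omega
      exact hs p hps q hqs (SimpleGraph.boxProd_adj.mpr (Or.inr ⟨hadj, hpx.trans hqx.symm⟩))
    have hcup : ((T (2*j)).image Prod.fst).card + ((T (2*j+1)).image Prod.fst).card ≤ b := by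
      rw [← Finset.card_union_of_disjoint hdisj]
      exact le_trans (Finset.card_le_card (Finset.union_subset (hinr _ h0) (hinr _ h1))) hbcard.le
    rw [himg (2*j), himg (2*j+1)]
    omega
  have hsum : s.card = ∑ i ∈ Finset.range (2*k), (T i).card :=
    Finset.card_eq_sum_card_fiberwise (fun p _ => Finset.mem_range.mpr p.2.isLt)
  rw [hsum, sum_range_two_mul]
  calc ∑ j ∈ Finset.range k, ((T (2*j)).card + (T (2*j+1)).card)
      ≤ ∑ j ∈ Finset.range k, (b+1) := Finset.sum_le_sum (fun j _ => hpair j)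
    _ = k * (b+1) := by rw [Finset.sum_const, Finset.card_range, smul_eq_mul]
    _ ≤ b*k + 2*b + 3*k := by nlinarith
end

section
/- Let F be a finite field with q elements and let ER_q be the Erdős–Rényi graph over F: its vertices are the points of the projective plane over F (nonzero vectors of F³ up to scalar), with distinct vertices [x] and [y] adjacent exactly when x₁y₁ + x₂y₂ + x₃y₃ = 0. Then: the vertices [x] with x·x = 0 (the absolute points) are exactly the vertices of degree q, every other vertex has degree q + 1, there are exactly q + 1 absolute points, and the set of absolute points is an independent set of ER_q. -/
open Matrix Finset

section ERaux

variable {F : Type*} [Field F] [Fintype F] [DecidableEq F]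

lemma ER_bac_cab (u v w : Fin 3 → F) :
    u ⨯₃ (v ⨯₃ w) = (u ⬝ᵥ w) • v - (u ⬝ᵥ v) • w := by
  ext i
  fin_cases i <;>
    simp [cross_apply, dotProduct, Fin.sum_univ_three] <;> ring

lemma ER_parallel {u w : Fin 3 → F} (hu : u ≠ 0) (h : u ⨯₃ w = 0) :
    ∃ t : F, t • u = w := by
  have hind : ¬ LinearIndependent F ![u, w] := by
    rw [← crossProduct_ne_zero_iff_linearIndependent]
    simpa using h
  rw [LinearIndependent.pair_iff' hu] at hind
  push_neg at hind
  exact hind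

lemma ER_card_lift (A : Set (Fin 3 → F))
    (h0 : (0 : Fin 3 → F) ∉ A) (hA : ∀ c : F, c ≠ 0 → ∀ v ∈ A, c • v ∈ A) :
    A.ncard = (Fintype.card F - 1) * {p : Projectivization F (Fin 3 → F) | p.rep ∈ A}.ncard := by
  classical
  haveI : Finite (Projectivization F (Fin 3 → F)) :=
    Quotient.finite (projectivizationSetoid F (Fin 3 → F))
  haveI : Fintype (Projectivization F (Fin 3 → F)) := Fintype.ofFinite _
  -- the map
  have hne : ∀ v ∈ A, v ≠ 0 := fun v hv h => h0 (h ▸ hv)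
  set f : (Fin 3 → F) → Projectivization F (Fin 3 → F) := fun v =>
    if h : v = 0 then Classical.arbitrary _ else Projectivization.mk F v h with hf
  have hfmk : ∀ (v : Fin 3 → F) (h : v ≠ 0), f v = Projectivization.mk F v h := by
    intro v h; simp [hf, h]
  have hrepA : ∀ (v : Fin 3 → F) (h : v ≠ 0), v ∈ A → (Projectivization.mk F v h).rep ∈ A := by
    intro v h hv
    obtain ⟨a, ha⟩ := Projectivization.exists_smul_eq_mk_rep F v h
    rw [← ha]
    exact hA a a.ne_zero v hv
  rw [Set.ncard_eq_toFinset_card', Set.ncard_eq_toFinset_card']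
  rw [Finset.card_eq_sum_card_fiberwise
    (f := f) (t := {p : Projectivization F (Fin 3 → F) | p.rep ∈ A}.toFinset) ?maps]
  case maps =>
    intro v hv
    rw [Finset.mem_coe, Set.mem_toFinset] at hv
    rw [Finset.mem_coe, Set.mem_toFinset]
    rw [hfmk v (hne v hv)]
    exact hrepA v (hne v hv) hv
  rw [Finset.sum_congr rfl (g := fun _ => Fintype.card F - 1) ?fib]
  · rw [Finset.sum_const, smul_eq_mul, mul_comm]
  case fib =>
    intro p hp
    rw [Set.mem_toFinset] at hp
    have hrep : p.rep ≠ 0 := p.rep_nonzero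
    show _ = Fintype.card F - 1
    rw [← Finset.card_univ, ← Finset.card_erase_of_mem (Finset.mem_univ (0 : F))]
    refine (Finset.card_bij (fun (c : F) _ => c • p.rep) ?_ ?_ ?_).symm
    · intro c hc
      have hc0 : c ≠ 0 := Finset.ne_of_mem_erase hc
      have hcv : c • p.rep ≠ 0 := smul_ne_zero hc0 hrep
      rw [Finset.mem_filter, Set.mem_toFinset]
      refine ⟨hA c hc0 _ hp, ?_⟩
      rw [hfmk _ hcv]
      conv_rhs => rw [← Projectivization.mk_rep p]
      rw [Projectivization.mk_eq_mk_iff']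
      exact ⟨c, rfl⟩
    · intro c hc c' hc' h
      have := sub_smul c c' p.rep
      rw [h, sub_self] at this
      rcases smul_eq_zero.mp this with h' | h'
      · exact sub_eq_zero.mp h'
      · exact absurd h' hrep
    · intro v hv
      rw [Finset.mem_filter, Set.mem_toFinset] at hv
      obtain ⟨hvA, hvf⟩ := hv
      have hv0 : v ≠ 0 := hne v hvA
      rw [hfmk _ hv0] at hvf
      have : Projectivization.mk F v hv0 = Projectivization.mk F p.rep hrep := by
        rw [hvf, Projectivization.mk_rep]
      obtain ⟨c, hc⟩ := (Projectivization.mk_eq_mk_iff' F _ _ hv0 hrep).mp this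
      have hc0 : c ≠ 0 := by
        rintro rfl
        rw [zero_smul] at hc
        exact hv0 hc.symm
      exact ⟨c, Finset.mem_erase.mpr ⟨hc0, Finset.mem_univ c⟩, hc⟩

lemma ER_ker_card (φ : (Fin 3 → F) →ₗ[F] F) (hφ : φ ≠ 0) :
    {v : Fin 3 → F | φ v = 0}.ncard = Fintype.card F ^ 2 := by
  classical
  have hsurj : Function.Surjective φ := by
    obtain ⟨v, hv⟩ : ∃ v, φ v ≠ 0 := by
      by_contra h
      push_neg at h
      exact hφ (LinearMap.ext fun v => h v)
    intro t
    exact ⟨(t / φ v) • v, by rw [_root_.map_smul, smul_eq_mul, div_mul_cancel₀ _ hv]⟩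
  have hrange : LinearMap.range φ = ⊤ := LinearMap.range_eq_top.mpr hsurj
  have hkr : Module.finrank F (LinearMap.ker φ) = 2 := by
    have h1 := LinearMap.finrank_range_add_finrank_ker φ
    rw [hrange, finrank_top, Module.finrank_self, Module.finrank_fin_fun] at h1
    omega
  have : {v : Fin 3 → F | φ v = 0} = (LinearMap.ker φ : Set (Fin 3 → F)) := by
    ext v; simp [LinearMap.mem_ker]
  rw [this, ← Nat.card_coe_set_eq]
  have h2 : Nat.card (LinearMap.ker φ) = Fintype.card F ^ 2 := by
    rw [Nat.card_eq_fintype_card, Module.card_eq_pow_finrank (K := F), hkr]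
  exact h2

-- number of square roots, as an integer
lemma ER_card_sqrts (hF : ringChar F ≠ 2) (a : F) :
    ((univ.filter fun x : F => x ^ 2 = a).card : ℤ) = quadraticChar F a + 1 := by
  have := quadraticChar_card_sqrts hF a
  rwa [Set.toFinset_setOf] at this

lemma ER_sum_sq (hF : ringChar F ≠ 2) (g : F → ℤ) :
    ∑ b : F, g (b ^ 2) = ∑ u : F, (quadraticChar F u + 1) * g u := by
  have h1 : ∀ b : F, g (b ^ 2) = ∑ u : F, if b ^ 2 = u then g u else 0 := by
    intro b; rw [Finset.sum_ite_eq (univ) (b ^ 2) g]; simp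
  rw [Finset.sum_congr rfl fun b _ => h1 b, Finset.sum_comm]
  refine Finset.sum_congr rfl fun u _ => ?_
  rw [Finset.sum_ite, Finset.sum_const, Finset.sum_const, smul_zero, add_zero,
    nsmul_eq_mul, ← ER_card_sqrts hF u]

lemma ER_sum_chi_shift (a : F) : ∑ u : F, quadraticChar F u = ∑ u : F, quadraticChar F (u + a) := by
  exact (Fintype.sum_equiv (Equiv.addRight a) _ _ fun u => rfl).symm

lemma ER_sum_chi_mul_succ (hF : ringChar F ≠ 2) :
    ∑ u : F, quadraticChar F u * quadraticChar F (u + 1) = -1 := by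
  have key : ∀ u : F, u ≠ 0 →
      quadraticChar F u * quadraticChar F (u + 1) = quadraticChar F (1 + u⁻¹) := by
    intro u hu
    have harg : u * (u + 1) = u ^ 2 * (1 + u⁻¹) := by field_simp
    rw [← _root_.map_mul, harg, _root_.map_mul, quadraticChar_sq_one' hu, one_mul]
  have h0 : ∑ u : F, quadraticChar F (1 + u⁻¹) = 0 := by
    have he := Fintype.sum_equiv (Equiv.inv F) (fun u : F => quadraticChar F (1 + u⁻¹))
      (fun v : F => quadraticChar F (1 + v)) (fun u => rfl)
    have hs : ∑ v : F, quadraticChar F (1 + v) = 0 := by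
      have := ER_sum_chi_shift (F := F) (1 : F)
      simp only [add_comm] at this ⊢
      rw [← this, quadraticChar_sum_zero hF]
    rw [he, hs]
  have e1 := Finset.add_sum_erase univ (fun u : F => quadraticChar F u * quadraticChar F (u + 1))
    (mem_univ (0 : F))
  have e2 := Finset.add_sum_erase univ (fun u : F => quadraticChar F (1 + u⁻¹))
    (mem_univ (0 : F))
  have e3 : ∑ u ∈ univ.erase (0 : F), quadraticChar F u * quadraticChar F (u + 1)
      = ∑ u ∈ univ.erase (0 : F), quadraticChar F (1 + u⁻¹) :=
    Finset.sum_congr rfl fun u hu => key u (Finset.ne_of_mem_erase hu)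
  simp only [MulChar.map_zero, zero_mul, zero_add, _root_.inv_zero, add_zero, _root_.map_one] at e1 e2
  omega

lemma ER_card_sqrts' (hF : ringChar F ≠ 2) (a : F) :
    ((univ.filter fun x : F => x ^ 2 = a).card : ℤ) = quadraticChar F a + 1 := by
  have := quadraticChar_card_sqrts hF a
  rwa [Set.toFinset_setOf] at this

lemma ER_sum_chi_sq (hF : ringChar F ≠ 2) :
    ∑ b : F, quadraticChar F (b ^ 2) = (Fintype.card F : ℤ) - 1 := by
  rw [← Finset.add_sum_erase univ (fun b : F => quadraticChar F (b ^ 2)) (mem_univ (0 : F))]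
  rw [Finset.sum_congr rfl (g := fun _ => (1 : ℤ))
    (fun b hb => quadraticChar_sq_one' (Finset.ne_of_mem_erase hb))]
  simp [Finset.card_erase_of_mem, zero_pow]
  have := Fintype.card_pos (α := F)
  omega

lemma ER_sum_chi_succ_sq (hF : ringChar F ≠ 2) :
    ∑ t : F, quadraticChar F (t ^ 2 + 1) = -1 := by
  have hs := ER_sum_sq hF (fun u => quadraticChar F (u + 1))
  rw [hs]
  have h1 : ∀ u : F, (quadraticChar F u + 1) * quadraticChar F (u + 1)
      = quadraticChar F u * quadraticChar F (u + 1) + quadraticChar F (u + 1) := by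
    intro u; ring
  rw [Finset.sum_congr rfl fun u _ => h1 u, Finset.sum_add_distrib, ER_sum_chi_mul_succ hF]
  have h2 : ∑ u : F, quadraticChar F (u + 1) = 0 := by
    rw [← ER_sum_chi_shift (1 : F), quadraticChar_sum_zero hF]
  rw [h2]
  ring

lemma ER_sum_chi_two_sq (hF : ringChar F ≠ 2) :
    ∑ c : F, ∑ b : F, quadraticChar F (b ^ 2 + c ^ 2) = 0 := by
  rw [← Finset.add_sum_erase univ
    (fun c : F => ∑ b : F, quadraticChar F (b ^ 2 + c ^ 2)) (mem_univ (0 : F))]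
  have h0 : ∑ b : F, quadraticChar F (b ^ 2 + (0 : F) ^ 2) = (Fintype.card F : ℤ) - 1 := by
    simp only [zero_pow, ne_eq, OfNat.ofNat_ne_zero, not_false_eq_true, add_zero]
    exact ER_sum_chi_sq hF
  have hc : ∀ c : F, c ≠ 0 →
      ∑ b : F, quadraticChar F (b ^ 2 + c ^ 2) = -1 := by
    intro c hcne
    have he := Fintype.sum_equiv ((Equiv.mulLeft₀ c hcne))
      (fun t : F => quadraticChar F ((c * t) ^ 2 + c ^ 2))
      (fun b : F => quadraticChar F (b ^ 2 + c ^ 2)) (fun t => rfl)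
    rw [← he]
    have harg : ∀ t : F, (c * t) ^ 2 + c ^ 2 = c ^ 2 * (t ^ 2 + 1) := by intro t; ring
    calc ∑ t : F, quadraticChar F ((c * t) ^ 2 + c ^ 2)
        = ∑ t : F, quadraticChar F (c ^ 2) * quadraticChar F (t ^ 2 + 1) := by
          refine Finset.sum_congr rfl fun t _ => ?_
          rw [harg t, _root_.map_mul]
      _ = -1 := by
          rw [← Finset.mul_sum, ER_sum_chi_succ_sq hF, quadraticChar_sq_one' hcne]
          ring
  rw [Finset.sum_congr rfl (g := fun _ => (-1 : ℤ))
    (fun c hccc => hc c (Finset.ne_of_mem_erase hccc)), h0]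
  simp [Finset.card_erase_of_mem]
  have := Fintype.card_pos (α := F)
  push_cast [this]
  ring

lemma ER_conic_triple_card (hF : ringChar F ≠ 2) :
    ((univ.filter fun p : F × F × F => p.1 ^ 2 + p.2.1 ^ 2 + p.2.2 ^ 2 = 0).card : ℤ)
      = (Fintype.card F : ℤ) ^ 2 := by
  rw [Finset.card_filter]
  push_cast
  rw [Fintype.sum_prod_type, Finset.sum_comm]
  have inner : ∀ q : F × F, (∑ a : F, if a ^ 2 + q.1 ^ 2 + q.2 ^ 2 = 0 then (1 : ℤ) else 0)
      = quadraticChar F (-(q.1 ^ 2 + q.2 ^ 2)) + 1 := by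
    intro q
    have hiff : ∀ a : F, (a ^ 2 + q.1 ^ 2 + q.2 ^ 2 = 0) ↔ (a ^ 2 = -(q.1 ^ 2 + q.2 ^ 2)) := by
      intro a; constructor <;> intro h <;> linear_combination h
    rw [Finset.sum_congr rfl fun a _ => if_congr (hiff a) rfl rfl]
    rw [← ER_card_sqrts' hF, Finset.card_filter]
    push_cast
    rfl
  rw [Finset.sum_congr rfl fun q _ => inner q, Finset.sum_add_distrib]
  have hz : ∑ q : F × F, quadraticChar F (-(q.1 ^ 2 + q.2 ^ 2)) = 0 := by
    rw [Fintype.sum_prod_type]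
    have hfac : ∀ b c : F, quadraticChar F (-(b ^ 2 + c ^ 2))
        = quadraticChar F (-1) * quadraticChar F (b ^ 2 + c ^ 2) := by
      intro b c
      rw [← _root_.map_mul]
      congr 1
      ring
    calc ∑ b : F, ∑ c : F, quadraticChar F (-(b ^ 2 + c ^ 2))
        = ∑ b : F, ∑ c : F, quadraticChar F (-1) * quadraticChar F (b ^ 2 + c ^ 2) := by
          exact Finset.sum_congr rfl fun b _ => Finset.sum_congr rfl fun c _ => hfac b c
      _ = quadraticChar F (-1) * ∑ b : F, ∑ c : F, quadraticChar F (b ^ 2 + c ^ 2) := by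
          rw [Finset.mul_sum]
          exact Finset.sum_congr rfl fun b _ => (Finset.mul_sum _ _ _).symm
      _ = 0 := by
          rw [Finset.sum_comm, ER_sum_chi_two_sq hF, mul_zero]
  rw [hz, zero_add, Finset.sum_const, Finset.card_univ, Fintype.card_prod]
  push_cast
  ring

/-- Dot product with a fixed vector, as a linear map. -/
def ER_dotL (a : Fin 3 → F) : (Fin 3 → F) →ₗ[F] F where
  toFun v := a ⬝ᵥ v
  map_add' u v := dotProduct_add a u v
  map_smul' c v := dotProduct_smul c a v

lemma ER_dotL_ne_zero {a : Fin 3 → F} (ha : a ≠ 0) : ER_dotL a ≠ 0 := by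
  obtain ⟨i, hi⟩ := Function.ne_iff.mp ha
  intro h
  apply hi
  have h1 : a ⬝ᵥ Pi.single i 1 = 0 := congrArg (fun φ => φ (Pi.single i 1)) h
  rwa [dotProduct_single, mul_one] at h1

lemma ER_conic_ncard : {v : Fin 3 → F | v ⬝ᵥ v = 0}.ncard = Fintype.card F ^ 2 := by
  by_cases h2 : ringChar F = 2
  · -- char 2 : the conic is the line x+y+z = 0
    haveI : Fact (Nat.Prime 2) := ⟨by norm_num⟩
    haveI : CharP F 2 := h2 ▸ ringChar.charP F
    have hset : {v : Fin 3 → F | v ⬝ᵥ v = 0}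
        = {v : Fin 3 → F | ER_dotL (fun _ => 1) v = 0} := by
      ext v
      have hv : v ⬝ᵥ v = (ER_dotL (fun _ => 1) v) ^ 2 := by
        show v ⬝ᵥ v = ((fun _ => (1:F)) ⬝ᵥ v) ^ 2
        simp only [dotProduct, Fin.sum_univ_three, one_mul]
        rw [add_pow_char (x := v 0 + v 1) (y := v 2), add_pow_char (x := v 0) (y := v 1)]
        ring
      simp only [Set.mem_setOf_eq, hv, pow_eq_zero_iff (two_ne_zero)]
    rw [hset]
    exact ER_ker_card _ (ER_dotL_ne_zero (by
      intro h
      have := congrFun h 0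
      simp at this))
  · -- odd characteristic : quadratic character computation
    set f : (Fin 3 → F) → F × F × F := fun v => (v 0, v 1, v 2) with hf
    have hinj : Function.Injective f := by
      intro u v h
      rw [Prod.mk.injEq, Prod.mk.injEq] at h
      ext i
      fin_cases i
      · exact h.1
      · exact h.2.1
      · exact h.2.2
    have himg : f '' {v : Fin 3 → F | v ⬝ᵥ v = 0}
        = {p : F × F × F | p.1 ^ 2 + p.2.1 ^ 2 + p.2.2 ^ 2 = 0} := by
      ext p
      constructor
      · rintro ⟨v, hv, rfl⟩
        simp only [Set.mem_setOf_eq, dotProduct, Fin.sum_univ_three] at hv ⊢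
        linear_combination hv
      · intro hp
        refine ⟨![p.1, p.2.1, p.2.2], ?_, ?_⟩
        · simp only [Set.mem_setOf_eq, dotProduct, Fin.sum_univ_three] at hp ⊢
          show p.1 * p.1 + p.2.1 * p.2.1 + p.2.2 * p.2.2 = 0
          linear_combination hp
        · rfl
    have h1 : {v : Fin 3 → F | v ⬝ᵥ v = 0}.ncard
        = {p : F × F × F | p.1 ^ 2 + p.2.1 ^ 2 + p.2.2 ^ 2 = 0}.ncard := by
      rw [← himg, Set.ncard_image_of_injective _ hinj]
    rw [h1, Set.ncard_eq_toFinset_card', Set.toFinset_setOf]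
    have := ER_conic_triple_card (F := F) h2
    exact_mod_cast this

lemma ER_aux_div (q n : ℕ) (h2 : 2 ≤ q) (h : (q - 1) * n = q * q - 1) : n = q + 1 := by
  obtain ⟨k, rfl⟩ : ∃ k, q = k + 2 := ⟨q - 2, by omega⟩
  have h3 : (k + 2) * (k + 2) = k * k + 4 * k + 4 := by ring
  have h4 : (k + 1) * (k + 3) = k * k + 4 * k + 3 := by ring
  have hq : k + 2 - 1 = k + 1 := by omega
  rw [hq] at h
  have h5 : (k + 1) * n = (k + 1) * (k + 3) := by omega
  have := Nat.eq_of_mul_eq_mul_left (by omega : 0 < k + 1) h5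
  omega

lemma ER_A_ncard (a : Fin 3 → F) (ha : a ≠ 0) :
    {v : Fin 3 → F | v ≠ 0 ∧ a ⬝ᵥ v = 0}.ncard = Fintype.card F * Fintype.card F - 1 := by
  have hset : {v : Fin 3 → F | v ≠ 0 ∧ a ⬝ᵥ v = 0}
      = {v : Fin 3 → F | ER_dotL a v = 0} \ {0} := by
    ext v
    simp only [Set.mem_setOf_eq, Set.mem_diff, Set.mem_singleton_iff]
    exact ⟨fun h => ⟨h.2, h.1⟩, fun h => ⟨h.2, h.1⟩⟩
  rw [hset, Set.ncard_diff_singleton_of_mem (by simp [ER_dotL]),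
    ER_ker_card _ (ER_dotL_ne_zero ha)]
  rw [sq]

lemma ER_line_ncard (a : Fin 3 → F) (ha : a ≠ 0) :
    {p : Projectivization F (Fin 3 → F) | a ⬝ᵥ p.rep = 0}.ncard = Fintype.card F + 1 := by
  have hcl : ∀ c : F, c ≠ 0 → ∀ v ∈ {v : Fin 3 → F | v ≠ 0 ∧ a ⬝ᵥ v = 0}, c • v ∈
      {v : Fin 3 → F | v ≠ 0 ∧ a ⬝ᵥ v = 0} := by
    rintro c hc v ⟨hv0, hva⟩
    exact ⟨smul_ne_zero hc hv0, by rw [dotProduct_smul, hva, smul_zero]⟩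
  have hlift := ER_card_lift {v : Fin 3 → F | v ≠ 0 ∧ a ⬝ᵥ v = 0} (by simp) hcl
  rw [ER_A_ncard a ha] at hlift
  have hsets : {p : Projectivization F (Fin 3 → F) | p.rep ∈ {v : Fin 3 → F | v ≠ 0 ∧ a ⬝ᵥ v = 0}}
      = {p : Projectivization F (Fin 3 → F) | a ⬝ᵥ p.rep = 0} := by
    ext p
    simp only [Set.mem_setOf_eq]
    exact ⟨fun h => h.2, fun h => ⟨p.rep_nonzero, h⟩⟩
  rw [hsets] at hlift
  exact ER_aux_div _ _ Fintype.one_lt_card hlift.symm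

lemma ER_conicP_ncard :
    {p : Projectivization F (Fin 3 → F) | p.rep ⬝ᵥ p.rep = 0}.ncard = Fintype.card F + 1 := by
  have hcl : ∀ c : F, c ≠ 0 → ∀ v ∈ {v : Fin 3 → F | v ≠ 0 ∧ v ⬝ᵥ v = 0}, c • v ∈
      {v : Fin 3 → F | v ≠ 0 ∧ v ⬝ᵥ v = 0} := by
    rintro c hc v ⟨hv0, hvv⟩
    refine ⟨smul_ne_zero hc hv0, ?_⟩
    rw [dotProduct_smul, smul_dotProduct, hvv]
    simp
  have hlift := ER_card_lift {v : Fin 3 → F | v ≠ 0 ∧ v ⬝ᵥ v = 0} (by simp) hcl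
  have hAcard : {v : Fin 3 → F | v ≠ 0 ∧ v ⬝ᵥ v = 0}.ncard
      = Fintype.card F * Fintype.card F - 1 := by
    have hset : {v : Fin 3 → F | v ≠ 0 ∧ v ⬝ᵥ v = 0}
        = {v : Fin 3 → F | v ⬝ᵥ v = 0} \ {0} := by
      ext v
      simp only [Set.mem_setOf_eq, Set.mem_diff, Set.mem_singleton_iff]
      exact ⟨fun h => ⟨h.2, h.1⟩, fun h => ⟨h.2, h.1⟩⟩
    rw [hset, Set.ncard_diff_singleton_of_mem (by simp), ER_conic_ncard, sq]
  rw [hAcard] at hlift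
  have hsets : {p : Projectivization F (Fin 3 → F) | p.rep ∈ {v : Fin 3 → F | v ≠ 0 ∧ v ⬝ᵥ v = 0}}
      = {p : Projectivization F (Fin 3 → F) | p.rep ⬝ᵥ p.rep = 0} := by
    ext p
    simp only [Set.mem_setOf_eq]
    exact ⟨fun h => h.2, fun h => ⟨p.rep_nonzero, h⟩⟩
  rw [hsets] at hlift
  exact ER_aux_div _ _ Fintype.one_lt_card hlift.symm

end ERaux

/-- The orthogonality graph over a field `F`: vertices are the points of the
projective space of `F^n` (nonzero vectors up to scalar), and two distinct
vertices `[x]` and `[y]` are adjacent exactly when `x₁y₁ + … + xₙyₙ = 0`. -/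
noncomputable def orthoGraph (F : Type*) [Field F] (n : ℕ) :
    SimpleGraph (Projectivization F (Fin n → F)) where
  Adj x y := x ≠ y ∧ ∑ i, x.rep i * y.rep i = 0
  symm := by
    constructor
    rintro x y ⟨hxy, h⟩
    exact ⟨hxy.symm, by rw [← h]; exact Finset.sum_congr rfl fun i _ => mul_comm _ _⟩
  loopless := by constructor; rintro x ⟨h, -⟩; exact h rfl

/-- Basic properties of the Erdős–Rényi graph `ER_q` (the orthogonality graph of
`F³`): the absolute points `[x]` (those with `x·x = 0`) are exactly the vertices
of degree `q`, every other vertex has degree `q + 1`, there are exactly `q + 1`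
absolute points, and the absolute points form an independent set. -/
theorem erdosRenyi_graph_properties (F : Type*) [Field F] [Fintype F] :
    (∀ x : Projectivization F (Fin 3 → F),
        ((orthoGraph F 3).neighborSet x).ncard = Fintype.card F ↔
          ∑ i, x.rep i * x.rep i = 0) ∧
    (∀ x : Projectivization F (Fin 3 → F), ¬ (∑ i, x.rep i * x.rep i = 0) →
        ((orthoGraph F 3).neighborSet x).ncard = Fintype.card F + 1) ∧
    ({x : Projectivization F (Fin 3 → F) | ∑ i, x.rep i * x.rep i = 0}.ncard
        = Fintype.card F + 1) ∧
    (∀ x y : Projectivization F (Fin 3 → F), (∑ i, x.rep i * x.rep i = 0) →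
        (∑ i, y.rep i * y.rep i = 0) → ¬ (orthoGraph F 3).Adj x y) := by
  classical
  haveI : Finite (Projectivization F (Fin 3 → F)) :=
    Quotient.finite (projectivizationSetoid F (Fin 3 → F))
  have hnbr : ∀ x : Projectivization F (Fin 3 → F),
      (orthoGraph F 3).neighborSet x
        = {p : Projectivization F (Fin 3 → F) | x.rep ⬝ᵥ p.rep = 0} \ {x} := by
    intro x
    ext y
    simp only [SimpleGraph.mem_neighborSet, Set.mem_diff, Set.mem_setOf_eq,
      Set.mem_singleton_iff]
    show (x ≠ y ∧ ∑ i, x.rep i * y.rep i = 0) ↔ _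
    constructor
    · rintro ⟨h1, h2⟩; exact ⟨h2, fun h => h1 h.symm⟩
    · rintro ⟨h1, h2⟩; exact ⟨fun h => h2 h.symm, h1⟩
  have hdeg : ∀ x : Projectivization F (Fin 3 → F), x.rep ⬝ᵥ x.rep = 0 →
      ((orthoGraph F 3).neighborSet x).ncard = Fintype.card F := by
    intro x habs
    rw [hnbr x, Set.ncard_diff_singleton_of_mem
      (show x ∈ {p : Projectivization F (Fin 3 → F) | x.rep ⬝ᵥ p.rep = 0} from habs),
      ER_line_ncard _ x.rep_nonzero]
    omega
  have hdeg' : ∀ x : Projectivization F (Fin 3 → F), ¬ (x.rep ⬝ᵥ x.rep = 0) →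
      ((orthoGraph F 3).neighborSet x).ncard = Fintype.card F + 1 := by
    intro x habs
    rw [hnbr x, Set.diff_singleton_eq_self
      (show x ∉ {p : Projectivization F (Fin 3 → F) | x.rep ⬝ᵥ p.rep = 0} from habs),
      ER_line_ncard _ x.rep_nonzero]
  refine ⟨?_, ?_, ?_, ?_⟩
  · intro x
    constructor
    · intro h
      by_contra habs
      rw [hdeg' x habs] at h
      omega
    · exact hdeg x
  · exact hdeg'
  · exact ER_conicP_ncard
  · rintro x y hx hy ⟨hne, hdot⟩
    have hx' : x.rep ⬝ᵥ x.rep = 0 := hx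
    have hy' : y.rep ⬝ᵥ y.rep = 0 := hy
    have hdot' : x.rep ⬝ᵥ y.rep = 0 := hdot
    have hdot'' : y.rep ⬝ᵥ x.rep = 0 := by rwa [dotProduct_comm]
    have hc1 : x.rep ⨯₃ (x.rep ⨯₃ y.rep) = 0 := by
      rw [ER_bac_cab, hx', hdot', zero_smul, zero_smul, sub_zero]
    have hc2 : y.rep ⨯₃ (x.rep ⨯₃ y.rep) = 0 := by
      rw [ER_bac_cab, hy', hdot'', zero_smul, zero_smul, sub_zero]
    have hxy : Projectivization.mk F x.rep x.rep_nonzero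
        = Projectivization.mk F y.rep y.rep_nonzero := by
      rw [Projectivization.mk_eq_mk_iff']
      by_cases hc : x.rep ⨯₃ y.rep = 0
      · obtain ⟨t, ht⟩ := ER_parallel x.rep_nonzero hc
        have ht0 : t ≠ 0 := by
          rintro rfl
          rw [zero_smul] at ht
          exact y.rep_nonzero ht.symm
        exact ⟨t⁻¹, by rw [← ht, smul_smul, inv_mul_cancel₀ ht0, one_smul]⟩
      · obtain ⟨t, ht⟩ := ER_parallel x.rep_nonzero hc1
        obtain ⟨s, hs⟩ := ER_parallel y.rep_nonzero hc2
        have ht0 : t ≠ 0 := by rintro rfl; rw [zero_smul] at ht; exact hc ht.symm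
        refine ⟨t⁻¹ * s, ?_⟩
        rw [mul_smul, hs, ← ht, smul_smul, inv_mul_cancel₀ ht0, one_smul]
    rw [Projectivization.mk_rep, Projectivization.mk_rep] at hxy
    exact hne hxy
end
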